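/- arXiv:1204.3771 — 8 statements merged into one kernel-verified Lean document; each statement's English description precedes it below -/
import Mathlib

section
/- For every integer n ≥ 2, ∑_{k=1}^{n−2} 2^k · ∑_{b=1}^{n−2} [ (3·2^b + b² − 3)·( C(2n−b−k−4, n−b−2) − C(2n−b−k−4, n−2) ) + 2^{n−b−2} · ∑_{j=1}^{b} (j−1)²·( C(n+b−j−k−2, n−k−2) − C(n+b−j−k−2, n−2) ) ] + 2^{2n+1} − (n+3)·2^n + 2·C(2n,n) = (3n+5)·2^{2n−2} − 2(3n−1)·C(2n−2, n−1). -/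
open Finset

/-- The binomial coefficient `C(m, r)` for integer arguments, with the convention
that `C(m, r) = 0` when `r < 0` or `r > m`. -/
def intChoose (m r : ℤ) : ℤ :=
  if 0 ≤ r ∧ r ≤ m then ((m.toNat).choose r.toNat : ℤ) else 0

lemma intChoose_natCast (m r : ℕ) : intChoose (m : ℤ) (r : ℤ) = (m.choose r : ℤ) := by
  unfold intChoose
  by_cases h : (r : ℤ) ≤ (m : ℤ)
  · rw [if_pos ⟨Int.natCast_nonneg r, h⟩]
    simp
  · rw [if_neg (by tauto), Nat.choose_eq_zero_of_lt (by exact_mod_cast not_le.mp h)]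
    simp

-- Pascal-type sum lemma used inside L1 induction
lemma pascal_sum (N r s : ℕ) (hrs : r ≤ s) :
    ∑ i ∈ Icc (r+1) s, ((N+1).choose i : ℤ)
      = 2 * ∑ i ∈ Icc (r+1) s, (N.choose i : ℤ) + (N.choose r : ℤ) - (N.choose s : ℤ) := by
  induction s, hrs using Nat.le_induction with
  | base => simp
  | succ s hs ih =>
      rw [Finset.sum_Icc_succ_top (by omega), Finset.sum_Icc_succ_top (by omega), ih]
      have : ((N+1).choose (s+1) : ℤ) = (N.choose s : ℤ) + (N.choose (s+1) : ℤ) := by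
        exact_mod_cast congrArg (Nat.cast (R := ℤ)) (Nat.choose_succ_succ' N s)
      push_cast at this ⊢
      linarith

-- the k-collapse lemma
lemma kcollapse (r s : ℕ) (hrs : r ≤ s) : ∀ K : ℕ,
    ∑ k ∈ Icc 1 K, (2:ℤ)^k * (((r+K-k).choose r : ℤ) - ((r+K-k).choose s : ℤ))
      = 2 * ∑ i ∈ Icc (r+1) s, ((r+K).choose i : ℤ) := by
  intro K
  induction K with
  | zero =>
      rw [show Icc 1 0 = (∅ : Finset ℕ) by rfl]
      rw [Finset.sum_empty]
      have : ∀ i ∈ Icc (r+1) s, ((r+0).choose i : ℤ) = 0 := by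
        intro i hi
        simp only [mem_Icc] at hi
        rw [Nat.choose_eq_zero_of_lt (by omega)]
        norm_num
      rw [Finset.sum_congr rfl this]
      simp
  | succ K ih =>
      have hL : ∑ k ∈ Icc 1 (K+1), (2:ℤ)^k * (((r+(K+1)-k).choose r : ℤ) - ((r+(K+1)-k).choose s : ℤ))
          = 2 * (((r+K).choose r : ℤ) - ((r+K).choose s : ℤ))
            + 2 * ∑ k ∈ Icc 1 K, (2:ℤ)^k * (((r+K-k).choose r : ℤ) - ((r+K-k).choose s : ℤ)) := by
        have e1 : ∀ K' : ℕ, ∑ k ∈ Icc 1 K', (2:ℤ)^k * (((r+K'-k).choose r : ℤ) - ((r+K'-k).choose s : ℤ))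
            = ∑ k ∈ range K', (2:ℤ)^(k+1) * (((r+K'-(k+1)).choose r : ℤ) - ((r+K'-(k+1)).choose s : ℤ)) := by
          intro K'
          refine Finset.sum_nbij' (fun k => k - 1) (fun k => k + 1) ?_ ?_ ?_ ?_ ?_
          · intro a ha; simp only [mem_Icc] at ha; simp only [mem_range]; omega
          · intro a ha; simp only [mem_range] at ha; simp only [mem_Icc]; omega
          · intro a ha; simp only [mem_Icc] at ha; show a - 1 + 1 = a; omega
          · intro a ha; simp only [mem_range] at ha; show a + 1 - 1 = a; omega
          · intro a ha; simp only [mem_Icc] at ha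
            have : a - 1 + 1 = a := by omega
            rw [this]
        rw [e1 (K+1), e1 K, Finset.sum_range_succ']
        have : ∀ k ∈ range K, (2:ℤ)^(k+1+1) * (((r+(K+1)-(k+1+1)).choose r : ℤ) - ((r+(K+1)-(k+1+1)).choose s : ℤ))
            = 2 * ((2:ℤ)^(k+1) * (((r+K-(k+1)).choose r : ℤ) - ((r+K-(k+1)).choose s : ℤ))) := by
          intro k hk
          have : r+(K+1)-(k+1+1) = r+K-(k+1) := by omega
          rw [this]; ring
        rw [Finset.sum_congr rfl this, ← Finset.mul_sum]
        have : r + (K+1) - (0+1) = r + K := by omega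
        rw [this]
        ring
      rw [hL, ih]
      have hps := pascal_sum (r+K) r s hrs
      have : ((r+K).choose r : ℤ) = (((r+K)).choose r : ℤ) := rfl
      have hrw : (r + (K+1)) = (r+K) + 1 := by omega
      rw [hrw, hps]
      ring

def Qs (ν a : ℕ) : ℤ := ∑ i ∈ Icc (a+1) ν, ((ν+a).choose i : ℤ)

lemma qrec_aux (N u v : ℕ) (huv : u ≤ v) :
    ∑ i ∈ Icc (u+1) v, ((N+1).choose i : ℤ)
      = 2 * ∑ i ∈ Icc (u+1) v, (N.choose i : ℤ) + (N.choose u : ℤ) - (N.choose v : ℤ) := by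
  induction v, huv using Nat.le_induction with
  | base => simp
  | succ v hv ih =>
      rw [Finset.sum_Icc_succ_top (by omega), Finset.sum_Icc_succ_top (by omega), ih]
      have : ((N+1).choose (v+1) : ℤ) = (N.choose v : ℤ) + (N.choose (v+1) : ℤ) := by
        exact_mod_cast congrArg (Nat.cast (R := ℤ)) (Nat.choose_succ_succ' N v)
      linarith

lemma Qs_rec (ν a : ℕ) (ha : a < ν) :
    Qs ν (a+1) = 2 * Qs ν a - (((ν+a+1).choose (a+1) : ℕ) : ℤ) := by
  unfold Qs
  have h1 : ∑ i ∈ Icc (a+1+1) ν, ((ν+(a+1)).choose i : ℤ)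
      = 2 * ∑ i ∈ Icc (a+1+1) ν, ((ν+a).choose i : ℤ) + ((ν+a).choose (a+1) : ℤ) - ((ν+a).choose ν : ℤ) := by
    have := qrec_aux (ν+a) (a+1) ν (by omega)
    rw [show ν + (a+1) = ν + a + 1 by omega]
    exact this
  have h2 : ∑ i ∈ Icc (a+1) ν, ((ν+a).choose i : ℤ)
      = ((ν+a).choose (a+1) : ℤ) + ∑ i ∈ Icc (a+1+1) ν, ((ν+a).choose i : ℤ) := by
    rw [show Icc (a+1) ν = insert (a+1) (Icc (a+1+1) ν) by
      ext x; simp only [mem_insert, mem_Icc]; omega]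
    rw [Finset.sum_insert (by simp only [mem_Icc]; omega)]
  have h3 : ((ν+a).choose ν : ℤ) = ((ν+a).choose a : ℤ) := by
    have hs := Nat.choose_symm (show a ≤ ν+a by omega)
    rw [show ν+a-a = ν by omega] at hs
    exact_mod_cast congrArg (Nat.cast (R := ℤ)) hs
  have h4 : ((ν+a+1).choose (a+1) : ℤ) = ((ν+a).choose a : ℤ) + ((ν+a).choose (a+1) : ℤ) := by
    exact_mod_cast congrArg (Nat.cast (R := ℤ)) (Nat.choose_succ_succ' (ν+a) a)
  rw [h1, h2, h3, h4]; ring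

lemma tel (f ψ : ℕ → ℤ) (M : ℕ) :
    ∑ t ∈ range M, (2 * ψ (t+1) - ψ t) * f t
      = ψ M * f M - ψ 0 * f 0 + ∑ t ∈ range M, ψ (t+1) * (2 * f t - f (t+1)) := by
  induction M with
  | zero => simp
  | succ M ih => rw [Finset.sum_range_succ, Finset.sum_range_succ, ih]; ring

lemma ga (c : ℕ) : ∀ M : ℕ, ∑ a ∈ range (M+1), ((c+a).choose a : ℤ) = ((c+M+1).choose M : ℤ) := by
  intro M
  induction M with
  | zero => simp
  | succ M ih =>
      rw [Finset.sum_range_succ, ih]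
      have : ((c+M+2).choose (M+1) : ℤ) = ((c+M+1).choose M : ℤ) + ((c+M+1).choose (M+1) : ℤ) := by
        exact_mod_cast congrArg (Nat.cast (R := ℤ)) (Nat.choose_succ_succ' (c+M+1) M)
      rw [show c+(M+1)+1 = c+M+2 by omega, this, show c+(M+1) = c+M+1 by omega]

lemma key_id (c M : ℕ) : ((M:ℤ)+1) * ((c+M+1).choose (M+1) : ℤ) = ((c:ℤ)+1) * ((c+M+1).choose M : ℤ) := by
  have h := Nat.choose_succ_right_eq (c+M+1) M
  rw [show c+M+1-M = c+1 by omega] at h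
  have h' : (((c+M+1).choose (M+1) : ℤ)) * ((M:ℤ)+1) = (((c+M+1).choose M : ℤ)) * ((c:ℤ)+1) := by
    exact_mod_cast h
  linarith [h']

lemma gb (c : ℕ) : ∀ M : ℕ, ∑ a ∈ range (M+1), (a:ℤ) * ((c+a).choose a : ℤ)
    = ((c:ℤ)+1) * (((c+M+2).choose M : ℤ) - ((c+M+1).choose M : ℤ)) := by
  intro M
  induction M with
  | zero => simp
  | succ M ih =>
      rw [Finset.sum_range_succ, ih]
      have p1 : ((c+M+3).choose (M+1) : ℤ) = ((c+M+2).choose M : ℤ) + ((c+M+2).choose (M+1) : ℤ) := by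
        exact_mod_cast congrArg (Nat.cast (R := ℤ)) (Nat.choose_succ_succ' (c+M+2) M)
      have p2 := key_id c M
      rw [show c+(M+1)+2 = c+M+3 by omega, show c+(M+1)+1 = c+M+2 by omega]
      rw [p1, show c+(M+1) = c+M+1 by omega]
      push_cast
      linarith

def Pp (N r : ℕ) : ℤ := ∑ i ∈ range (r+1), (N.choose i : ℤ)

lemma pd (N r : ℕ) : Pp (N+1) (r+1) = 2 * Pp N r + (N.choose (r+1) : ℤ) := by
  unfold Pp
  rw [Finset.sum_range_succ' (fun i => ((N+1).choose i : ℤ)) (r+1)]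
  have h1 : ∀ i ∈ range (r+1), ((N+1).choose (i+1) : ℤ) = (N.choose i : ℤ) + (N.choose (i+1) : ℤ) := by
    intro i _
    exact_mod_cast congrArg (Nat.cast (R := ℤ)) (Nat.choose_succ_succ' N i)
  rw [Finset.sum_congr rfl h1, Finset.sum_add_distrib]
  have h2 : ∑ i ∈ range (r+1), (N.choose (i+1) : ℤ) = ∑ i ∈ range (r+2), (N.choose i : ℤ) - 1 := by
    rw [Finset.sum_range_succ' (fun i => (N.choose i : ℤ)) (r+1)]
    simp
  rw [h2, Finset.sum_range_succ (fun i => (N.choose i : ℤ)) (r+1)]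
  simp
  ring

lemma pe (N : ℕ) : ∀ r : ℕ, Pp (N+1) r = 2 * Pp N r - (N.choose r : ℤ) := by
  intro r
  induction r with
  | zero => simp [Pp]
  | succ r ih =>
      have h1 : Pp (N+1) (r+1) = Pp (N+1) r + ((N+1).choose (r+1) : ℤ) := by
        unfold Pp; rw [Finset.sum_range_succ]
      have h2 : Pp N (r+1) = Pp N r + (N.choose (r+1) : ℤ) := by
        unfold Pp; rw [Finset.sum_range_succ]
      have h3 : ((N+1).choose (r+1) : ℤ) = (N.choose r : ℤ) + (N.choose (r+1) : ℤ) := by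
        exact_mod_cast congrArg (Nat.cast (R := ℤ)) (Nat.choose_succ_succ' N r)
      rw [h1, h2, h3, ih]; ring

lemma central_odd (ν : ℕ) : ((2*ν+1).choose (ν+1) : ℤ) = ((2*ν+1).choose ν : ℤ) := by
  have hs := Nat.choose_symm (show ν ≤ 2*ν+1 by omega)
  rw [show 2*ν+1-ν = ν+1 by omega] at hs
  exact_mod_cast congrArg (Nat.cast (R := ℤ)) hs

lemma central_even (ν : ℕ) : ((2*ν+2).choose (ν+1) : ℤ) = 2 * ((2*ν+1).choose ν : ℤ) := by
  have h : ((2*ν+2).choose (ν+1) : ℤ) = ((2*ν+1).choose ν : ℤ) + ((2*ν+1).choose (ν+1) : ℤ) := by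
    exact_mod_cast congrArg (Nat.cast (R := ℤ)) (Nat.choose_succ_succ' (2*ν+1) ν)
  rw [h, central_odd]; ring

lemma pc : ∀ ν : ℕ, Pp (2*ν+1) ν = 4^ν := by
  intro ν
  induction ν with
  | zero => simp [Pp]
  | succ ν ih =>
      have h1 : Pp (2*(ν+1)+1) (ν+1) = 2 * Pp (2*ν+2) ν + ((2*ν+2).choose (ν+1) : ℤ) := by
        rw [show 2*(ν+1)+1 = (2*ν+2)+1 by omega]
        exact pd (2*ν+2) ν
      have h2 : Pp (2*ν+2) ν = 2 * Pp (2*ν+1) ν - ((2*ν+1).choose ν : ℤ) := by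
        rw [show 2*ν+2 = (2*ν+1)+1 by omega]
        exact pe (2*ν+1) ν
      rw [h1, h2, ih, central_even]; ring

lemma key_id' (c M : ℕ) : ((M:ℤ)+1) * ((c+M+1).choose (M+1) : ℤ) = ((c:ℤ)+1) * ((c+M+1).choose M : ℤ) := by
  have h := Nat.choose_succ_right_eq (c+M+1) M
  rw [show c+M+1-M = c+1 by omega] at h
  have h' : (((c+M+1).choose (M+1) : ℤ)) * ((M:ℤ)+1) = (((c+M+1).choose M : ℤ)) * ((c:ℤ)+1) := by
    exact_mod_cast h
  linarith [h']

lemma gc (c : ℕ) : ∀ M : ℕ, ∑ a ∈ range (M+1), (a:ℤ) * 2^(M-a) * ((c+a).choose a : ℤ)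
    = ((c:ℤ)+1) * (Pp (c+M+1) M - ((c+M+1).choose M : ℤ)) := by
  intro M
  induction M with
  | zero => simp [Pp]
  | succ M ih =>
      rw [Finset.sum_range_succ]
      have hsplit : ∀ a ∈ range (M+1), (a:ℤ) * 2^(M+1-a) * ((c+a).choose a : ℤ)
          = 2 * ((a:ℤ) * 2^(M-a) * ((c+a).choose a : ℤ)) := by
        intro a ha
        simp only [mem_range] at ha
        rw [show M+1-a = (M-a)+1 by omega, pow_succ]
        ring
      rw [Finset.sum_congr rfl hsplit, ← Finset.mul_sum, ih]
      have hpd : Pp (c+(M+1)+1) (M+1) = 2 * Pp (c+M+1) M + ((c+M+1).choose (M+1) : ℤ) := by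
        rw [show c+(M+1)+1 = (c+M+1)+1 by omega]
        exact pd (c+M+1) M
      have p1 : ((c+M+2).choose (M+1) : ℤ) = ((c+M+1).choose M : ℤ) + ((c+M+1).choose (M+1) : ℤ) := by
        exact_mod_cast congrArg (Nat.cast (R := ℤ)) (Nat.choose_succ_succ' (c+M+1) M)
      have p2 := key_id' c M
      rw [hpd, show c+(M+1)+1 = c+M+2 by omega] at *
      rw [show M+1-(M+1) = 0 by omega, show c+(M+1) = c+M+1 by omega]
      push_cast
      push_cast at p1 p2
      nlinarith [p1, p2]

lemma g2 : ∀ U : ℕ, ∑ u ∈ range (U+1), (u:ℤ)^2 * 2^(U-u) = 6 * 2^U - ((U:ℤ)^2 + 4*U + 6) := by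
  intro U
  induction U with
  | zero => simp
  | succ U ih =>
      rw [Finset.sum_range_succ]
      have hsplit : ∀ u ∈ range (U+1), (u:ℤ)^2 * 2^(U+1-u) = 2 * ((u:ℤ)^2 * 2^(U-u)) := by
        intro u hu
        simp only [mem_range] at hu
        rw [show U+1-u = (U-u)+1 by omega, pow_succ]
        ring
      rw [Finset.sum_congr rfl hsplit, ← Finset.mul_sum, ih, show U+1-(U+1) = 0 by omega]
      push_cast
      ring

lemma tri (ν : ℕ) (G : ℕ → ℕ → ℤ) :
    ∑ b ∈ Icc 1 ν, ∑ a ∈ range b, G b a = ∑ a ∈ range ν, ∑ b ∈ Icc (a+1) ν, G b a := by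
  induction ν with
  | zero => simp
  | succ ν ih =>
      have h1 : ∀ a ∈ range ν, ∑ b ∈ Icc (a+1) (ν+1), G b a
          = (∑ b ∈ Icc (a+1) ν, G b a) + G (ν+1) a := by
        intro a ha
        exact Finset.sum_Icc_succ_top (by simp only [mem_range] at ha; omega) _
      have hR : ∑ a ∈ range (ν+1), ∑ b ∈ Icc (a+1) (ν+1), G b a
          = (∑ a ∈ range ν, ((∑ b ∈ Icc (a+1) ν, G b a) + G (ν+1) a)) + G (ν+1) ν := by
        rw [Finset.sum_range_succ, Finset.sum_congr rfl h1]
        simp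
      rw [Finset.sum_Icc_succ_top (by omega), ih, hR, Finset.sum_add_distrib, Finset.sum_range_succ]
      ring
-- MAIN THEOREM (appended to base)
theorem sum_formula_basic_ideals (n : ℕ) (hn : 2 ≤ n) :
    (∑ k ∈ Finset.Icc 1 (n-2), (2:ℤ)^k *
        ∑ b ∈ Finset.Icc 1 (n-2),
          ((3 * 2^b + (b : ℤ)^2 - 3) *
              (intChoose (2*(n:ℤ) - b - k - 4) ((n:ℤ) - b - 2) -
                intChoose (2*(n:ℤ) - b - k - 4) ((n:ℤ) - 2)) +
            2^(n-b-2) *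
              ∑ j ∈ Finset.Icc 1 b, ((j : ℤ) - 1)^2 *
                (intChoose ((n:ℤ) + b - j - k - 2) ((n:ℤ) - k - 2) -
                  intChoose ((n:ℤ) + b - j - k - 2) ((n:ℤ) - 2)))) +
      2^(2*n+1) - ((n:ℤ) + 3) * 2^n + 2 * ((2*n).choose n : ℤ) =
    (3*(n:ℤ) + 5) * 2^(2*n-2) - 2*(3*(n:ℤ) - 1) * ((2*n-2).choose (n-1) : ℤ) := by
  obtain ⟨ν, rfl⟩ : ∃ ν, n = ν + 2 := ⟨n - 2, by omega⟩
  clear hn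
  simp only [Nat.add_sub_cancel]
  -- Step 1: collapse the k-sums
  have hb1 : ∀ b ∈ Finset.Icc 1 ν,
      ∑ k ∈ Finset.Icc 1 ν, (2:ℤ)^k *
          ((3 * 2^b + (b : ℤ)^2 - 3) *
              (intChoose (2*((ν+2:ℕ):ℤ) - b - k - 4) (((ν+2:ℕ):ℤ) - b - 2) -
                intChoose (2*((ν+2:ℕ):ℤ) - b - k - 4) (((ν+2:ℕ):ℤ) - 2)) +
            2^(ν+2-b-2) *
              ∑ j ∈ Finset.Icc 1 b, ((j : ℤ) - 1)^2 *
                (intChoose (((ν+2:ℕ):ℤ) + b - j - k - 2) (((ν+2:ℕ):ℤ) - k - 2) -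
                  intChoose (((ν+2:ℕ):ℤ) + b - j - k - 2) (((ν+2:ℕ):ℤ) - 2)))
      = (3 * 2^b + (b : ℤ)^2 - 3) * (2 * Qs ν (ν-b))
          + 2^(ν-b) * ∑ j ∈ Finset.Icc 1 b, ((j : ℤ) - 1)^2 * (2 * Qs ν (b-j)) := by
    intro b hb
    simp only [mem_Icc] at hb
    have hstep : ∀ k ∈ Finset.Icc 1 ν, (2:ℤ)^k *
          ((3 * 2^b + (b : ℤ)^2 - 3) *
              (intChoose (2*((ν+2:ℕ):ℤ) - b - k - 4) (((ν+2:ℕ):ℤ) - b - 2) -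
                intChoose (2*((ν+2:ℕ):ℤ) - b - k - 4) (((ν+2:ℕ):ℤ) - 2)) +
            2^(ν+2-b-2) *
              ∑ j ∈ Finset.Icc 1 b, ((j : ℤ) - 1)^2 *
                (intChoose (((ν+2:ℕ):ℤ) + b - j - k - 2) (((ν+2:ℕ):ℤ) - k - 2) -
                  intChoose (((ν+2:ℕ):ℤ) + b - j - k - 2) (((ν+2:ℕ):ℤ) - 2)))
        = (3 * 2^b + (b : ℤ)^2 - 3) *
              ((2:ℤ)^k * (((ν-b+ν-k).choose (ν-b) : ℤ) - ((ν-b+ν-k).choose ν : ℤ)))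
          + 2^(ν-b) * ∑ j ∈ Finset.Icc 1 b, ((j : ℤ) - 1)^2 *
              ((2:ℤ)^k * (((b-j+ν-k).choose (b-j) : ℤ) - ((b-j+ν-k).choose ν : ℤ))) := by
      intro k hk
      simp only [mem_Icc] at hk
      have hj : ∀ j ∈ Finset.Icc 1 b, ((j : ℤ) - 1)^2 *
            (intChoose (((ν+2:ℕ):ℤ) + b - j - k - 2) (((ν+2:ℕ):ℤ) - k - 2) -
              intChoose (((ν+2:ℕ):ℤ) + b - j - k - 2) (((ν+2:ℕ):ℤ) - 2))
          = ((j : ℤ) - 1)^2 * (((b-j+ν-k).choose (b-j) : ℤ) - ((b-j+ν-k).choose ν : ℤ)) := by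
        intro j hjm
        simp only [mem_Icc] at hjm
        rw [show ((ν+2:ℕ):ℤ) + b - j - k - 2 = ((b-j+ν-k : ℕ):ℤ) by omega]
        rw [show ((ν+2:ℕ):ℤ) - k - 2 = ((ν-k : ℕ):ℤ) by omega]
        rw [show ((ν+2:ℕ):ℤ) - 2 = ((ν : ℕ):ℤ) by omega]
        rw [intChoose_natCast, intChoose_natCast]
        have hsym : ((b-j+ν-k).choose (ν-k)) = ((b-j+ν-k).choose (b-j)) := by
          have h0 := Nat.choose_symm (show b-j ≤ b-j+ν-k by omega)
          rwa [show b-j+ν-k-(b-j) = ν-k by omega] at h0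
        rw [hsym]
      rw [Finset.sum_congr rfl hj]
      rw [show (2*((ν+2:ℕ):ℤ) - b - k - 4) = ((ν-b+ν-k : ℕ):ℤ) by omega]
      rw [show ((ν+2:ℕ):ℤ) - b - 2 = ((ν-b : ℕ):ℤ) by omega]
      rw [show ((ν+2:ℕ):ℤ) - 2 = ((ν : ℕ):ℤ) by omega]
      rw [intChoose_natCast, intChoose_natCast]
      rw [show ν+2-b-2 = ν-b by omega]
      rw [Finset.mul_sum, Finset.mul_sum, mul_add, Finset.mul_sum]
      congr 1
      · ring
      · exact Finset.sum_congr rfl fun i _ => by ring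
    rw [Finset.sum_congr rfl hstep]
    rw [Finset.sum_add_distrib]
    congr 1
    · rw [← Finset.mul_sum]
      rw [kcollapse (ν-b) ν (by omega) ν]
      congr 1
      unfold Qs
      rw [Nat.add_comm (ν-b) ν]
    · rw [← Finset.mul_sum]
      congr 1
      rw [Finset.sum_comm]
      refine Finset.sum_congr rfl ?_
      intro j hjm
      simp only [mem_Icc] at hjm
      rw [← Finset.mul_sum]
      rw [kcollapse (b-j) ν (by omega) ν]
      congr 1
      unfold Qs
      rw [Nat.add_comm (b-j) ν]
  -- ψ, the summation factor
  set ψ : ℕ → ℤ := fun t => 12*(t:ℤ)*2^(ν-t) + 4*(t:ℤ) - 4*(ν:ℤ) - 20 with hψ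
  -- Step 2: the whole double sum
  have hSUM : (∑ k ∈ Finset.Icc 1 ν, (2:ℤ)^k *
        ∑ b ∈ Finset.Icc 1 ν,
          ((3 * 2^b + (b : ℤ)^2 - 3) *
              (intChoose (2*((ν+2:ℕ):ℤ) - b - k - 4) (((ν+2:ℕ):ℤ) - b - 2) -
                intChoose (2*((ν+2:ℕ):ℤ) - b - k - 4) (((ν+2:ℕ):ℤ) - 2)) +
            2^(ν+2-b-2) *
              ∑ j ∈ Finset.Icc 1 b, ((j : ℤ) - 1)^2 *
                (intChoose (((ν+2:ℕ):ℤ) + b - j - k - 2) (((ν+2:ℕ):ℤ) - k - 2) -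
                  intChoose (((ν+2:ℕ):ℤ) + b - j - k - 2) (((ν+2:ℕ):ℤ) - 2))))
      = ∑ t ∈ Finset.range ν, (2 * ψ (t+1) - ψ t) * Qs ν t := by
    calc (∑ k ∈ Finset.Icc 1 ν, (2:ℤ)^k * ∑ b ∈ Finset.Icc 1 ν, _)
        = ∑ k ∈ Finset.Icc 1 ν, ∑ b ∈ Finset.Icc 1 ν, (2:ℤ)^k * _ :=
          Finset.sum_congr rfl (fun k _ => Finset.mul_sum _ _ _)
      _ = ∑ b ∈ Finset.Icc 1 ν, ∑ k ∈ Finset.Icc 1 ν, (2:ℤ)^k * _ := Finset.sum_comm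
      _ = ∑ b ∈ Finset.Icc 1 ν, ((3 * 2^b + (b : ℤ)^2 - 3) * (2 * Qs ν (ν-b))
            + 2^(ν-b) * ∑ j ∈ Finset.Icc 1 b, ((j : ℤ) - 1)^2 * (2 * Qs ν (b-j))) :=
          Finset.sum_congr rfl hb1
      _ = (∑ b ∈ Finset.Icc 1 ν, (3 * 2^b + (b : ℤ)^2 - 3) * (2 * Qs ν (ν-b)))
            + ∑ b ∈ Finset.Icc 1 ν, 2^(ν-b) * ∑ j ∈ Finset.Icc 1 b, ((j : ℤ) - 1)^2 * (2 * Qs ν (b-j)) :=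
          Finset.sum_add_distrib
      _ = (∑ t ∈ Finset.range ν, (3 * 2^(ν-t) + ((ν-t : ℕ) : ℤ)^2 - 3) * (2 * Qs ν t))
            + ∑ a ∈ Finset.range ν,
                (6*2^(ν-a-1) - (((ν-a-1 : ℕ):ℤ)^2 + 4*((ν-a-1 : ℕ):ℤ) + 6)) * (2 * Qs ν a) := by
          congr 1
          · refine Finset.sum_nbij' (fun b => ν-b) (fun t => ν-t) ?_ ?_ ?_ ?_ ?_
            · intro b hbm; simp only [mem_Icc] at hbm; simp only [mem_range]; omega
            · intro t htm; simp only [mem_range] at htm; simp only [mem_Icc]; omega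
            · intro b hbm; simp only [mem_Icc] at hbm; show ν-(ν-b) = b; omega
            · intro t htm; simp only [mem_range] at htm; show ν-(ν-t) = t; omega
            · intro b hbm; simp only [mem_Icc] at hbm
              rw [show ν-(ν-b) = b by omega]
          · have hj : ∀ b ∈ Finset.Icc 1 ν,
                2^(ν-b) * (∑ j ∈ Finset.Icc 1 b, ((j : ℤ) - 1)^2 * (2 * Qs ν (b-j)))
                = ∑ a ∈ Finset.range b, 2^(ν-b) * ((((b-a : ℕ):ℤ) - 1)^2 * (2 * Qs ν a)) := by
              intro b hbm; simp only [mem_Icc] at hbm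
              rw [Finset.mul_sum]
              refine Finset.sum_nbij' (fun j => b-j) (fun a => b-a) ?_ ?_ ?_ ?_ ?_
              · intro j hjm; simp only [mem_Icc] at hjm; simp only [mem_range]; omega
              · intro a ham; simp only [mem_range] at ham; simp only [mem_Icc]; omega
              · intro j hjm; simp only [mem_Icc] at hjm; show b-(b-j) = j; omega
              · intro a ham; simp only [mem_range] at ham; show b-(b-a) = a; omega
              · intro j hjm; simp only [mem_Icc] at hjm
                rw [show b-(b-j) = j by omega]
            rw [Finset.sum_congr rfl hj]
            rw [tri ν (fun b a => 2^(ν-b) * ((((b-a : ℕ):ℤ) - 1)^2 * (2 * Qs ν a)))]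
            refine Finset.sum_congr rfl ?_
            intro a ham; simp only [mem_range] at ham
            have hbij : ∑ b ∈ Finset.Icc (a+1) ν, 2^(ν-b) * ((((b-a : ℕ):ℤ) - 1)^2 * (2 * Qs ν a))
                = ∑ u ∈ Finset.range ((ν-a-1)+1), (u:ℤ)^2 * 2^(ν-a-1-u) * (2 * Qs ν a) := by
              refine Finset.sum_nbij' (fun b => b-a-1) (fun u => a+1+u) ?_ ?_ ?_ ?_ ?_
              · intro b hbm; simp only [mem_Icc] at hbm; simp only [mem_range]; omega
              · intro u hum; simp only [mem_range] at hum; simp only [mem_Icc]; omega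
              · intro b hbm; simp only [mem_Icc] at hbm; show a+1+(b-a-1) = b; omega
              · intro u hum; simp only [mem_range] at hum; show a+1+u-a-1 = u; omega
              · intro b hbm; simp only [mem_Icc] at hbm
                rw [show (((b-a : ℕ):ℤ) - 1) = ((b-a-1 : ℕ):ℤ) by omega,
                    show ν-a-1-(b-a-1) = ν-b by omega]
                ring
            rw [hbij, ← Finset.sum_mul, g2 (ν-a-1)]
      _ = ∑ t ∈ Finset.range ν, (2 * ψ (t+1) - ψ t) * Qs ν t := by
          rw [← Finset.sum_add_distrib]
          refine Finset.sum_congr rfl ?_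
          intro t htm; simp only [mem_range] at htm
          have hc1 : ((ν-t : ℕ):ℤ) = (ν:ℤ) - t := by omega
          have hc2 : ((ν-t-1 : ℕ):ℤ) = (ν:ℤ) - t - 1 := by omega
          have hp1 : (2:ℤ)^(ν-t) = 2 * 2^(ν-t-1) := by
            conv_lhs => rw [show ν-t = (ν-t-1)+1 by omega]
            rw [pow_succ]; ring
          have hp2 : (2:ℤ)^(ν-(t+1)) = 2^(ν-t-1) := by
            rw [show ν-(t+1) = ν-t-1 by omega]
          simp only [hψ]
          push_cast
          rw [hc1, hc2, hp1, hp2]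
          ring
  rw [hSUM, tel (Qs ν) ψ ν]
  -- boundary values
  have hQν : Qs ν ν = 0 := by
    unfold Qs
    rw [Finset.Icc_eq_empty (by omega), Finset.sum_empty]
  have hQ0 : Qs ν 0 = 2^ν - 1 := by
    unfold Qs
    rw [Nat.add_zero]
    have h2 : ∑ i ∈ Finset.range (ν+1), ((ν.choose i : ℕ) : ℤ) = 2^ν := by
      exact_mod_cast Nat.sum_range_choose ν
    have h3 : ∑ i ∈ Finset.range (ν+1), ((ν.choose i : ℕ) : ℤ)
        = (∑ i ∈ Finset.range ν, ((ν.choose (i+1) : ℕ) : ℤ)) + 1 := by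
      rw [Finset.sum_range_succ' (fun i => ((ν.choose i : ℕ) : ℤ)) ν]
      simp
    have h4 : ∑ i ∈ Finset.Icc 1 ν, ((ν.choose i : ℕ) : ℤ)
        = ∑ i ∈ Finset.range ν, ((ν.choose (i+1) : ℕ) : ℤ) := by
      refine Finset.sum_nbij' (fun i => i-1) (fun i => i+1) ?_ ?_ ?_ ?_ ?_
      · intro i him; simp only [mem_Icc] at him; simp only [mem_range]; omega
      · intro i him; simp only [mem_range] at him; simp only [mem_Icc]; omega
      · intro i him; simp only [mem_Icc] at him; show i-1+1 = i; omega
      · intro i him; simp only [mem_range] at him; show i+1-1 = i; omega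
      · intro i him; simp only [mem_Icc] at him
        rw [show i-1+1 = i by omega]
    simp only [Nat.add_zero, Nat.zero_add]
    rw [h4]
    linarith [h2, h3]
  -- the remaining binomial sum
  have hrec : ∀ t ∈ Finset.range ν, ψ (t+1) * (2 * Qs ν t - Qs ν (t+1))
      = ψ (t+1) * (((ν+t+1).choose (t+1) : ℕ) : ℤ) := by
    intro t htm; simp only [mem_range] at htm
    rw [Qs_rec ν t htm]
    ring
  rw [Finset.sum_congr rfl hrec]
  have hshift : ∑ t ∈ Finset.range ν, ψ (t+1) * (((ν+t+1).choose (t+1) : ℕ) : ℤ)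
      = (∑ a ∈ Finset.range (ν+1), ψ a * (((ν+a).choose a : ℕ) : ℤ)) - ψ 0 := by
    rw [Finset.sum_range_succ' (fun a => ψ a * (((ν+a).choose a : ℕ) : ℤ)) ν]
    simp only [Nat.choose_zero_right, Nat.cast_one, mul_one, add_sub_cancel_right]
    exact Finset.sum_congr rfl fun t _ => rfl
  rw [hshift]
  have hsplit : ∑ a ∈ Finset.range (ν+1), ψ a * (((ν+a).choose a : ℕ) : ℤ)
      = 12 * (∑ a ∈ Finset.range (ν+1), (a:ℤ) * 2^(ν-a) * (((ν+a).choose a : ℕ) : ℤ))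
        + 4 * (∑ a ∈ Finset.range (ν+1), (a:ℤ) * (((ν+a).choose a : ℕ) : ℤ))
        - (4*(ν:ℤ)+20) * (∑ a ∈ Finset.range (ν+1), (((ν+a).choose a : ℕ) : ℤ)) := by
    rw [Finset.mul_sum, Finset.mul_sum, Finset.mul_sum, ← Finset.sum_add_distrib,
        ← Finset.sum_sub_distrib]
    refine Finset.sum_congr rfl ?_
    intro a _
    simp only [hψ]
    ring
  rw [hsplit, gc ν ν, gb ν ν, ga ν ν]
  rw [show ν+ν+1 = 2*ν+1 by omega, show ν+ν+2 = 2*ν+2 by omega, pc ν]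
  -- scalar finish
  have hA4 : (4:ℤ)^ν = 2^ν * 2^ν := by
    rw [← mul_pow]; norm_num
  have hconv2 : ((2*(ν+2)-2).choose (ν+2-1) : ℤ) = 2 * ((2*ν+1).choose ν : ℤ) := by
    rw [show 2*(ν+2)-2 = 2*ν+2 by omega, show ν+2-1 = ν+1 by omega]
    exact central_even ν
  have hconv1 : ((2*(ν+2)).choose (ν+2) : ℤ)
      = 4 * ((2*ν+1).choose ν : ℤ) + 2 * ((2*ν+2).choose ν : ℤ) := by
    have e1 : ((2*(ν+2)).choose (ν+2) : ℤ)
        = ((2*ν+3).choose (ν+1) : ℤ) + ((2*ν+3).choose (ν+2) : ℤ) := by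
      rw [show 2*(ν+2) = (2*ν+3)+1 by omega]
      exact_mod_cast congrArg (Nat.cast (R := ℤ)) (Nat.choose_succ_succ' (2*ν+3) (ν+1))
    have e2 : ((2*ν+3).choose (ν+2) : ℤ) = ((2*ν+3).choose (ν+1) : ℤ) := by
      have := central_odd (ν+1)
      rw [show 2*(ν+1)+1 = 2*ν+3 by omega, show ν+1+1 = ν+2 by omega] at this
      exact this
    have e3 : ((2*ν+3).choose (ν+1) : ℤ)
        = ((2*ν+2).choose ν : ℤ) + ((2*ν+2).choose (ν+1) : ℤ) := by
      rw [show 2*ν+3 = (2*ν+2)+1 by omega]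
      exact_mod_cast congrArg (Nat.cast (R := ℤ)) (Nat.choose_succ_succ' (2*ν+2) ν)
    rw [e1, e2, e3, central_even]
    ring
  have hREL : ((ν:ℤ)+2) * ((2*ν+2).choose ν : ℤ) = 2*((ν:ℤ)+1) * ((2*ν+1).choose ν : ℤ) := by
    have h := Nat.choose_succ_right_eq (2*ν+2) ν
    rw [show 2*ν+2-ν = ν+2 by omega] at h
    have h' : ((2*ν+2).choose (ν+1) : ℤ) * ((ν:ℤ)+1) = ((2*ν+2).choose ν : ℤ) * ((ν:ℤ)+2) := by
      exact_mod_cast h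
    rw [central_even] at h'
    linarith [h']
  rw [hconv1, hconv2, hQν, hQ0]
  simp only [hψ]
  push_cast
  rw [hA4]
  rw [show ν - 0 = ν by omega, show 2*(ν+2)-2 = 2*ν+2 by omega]
  linear_combination (4:ℤ) * hREL
end

section
/- For every integer n ≥ 1, the number of B_{n+1}-paths equals 4 times the number of B_n-paths minus 2 times the n-th Catalan number C(2n,n)/(n+1). -/
open List

/-- A `B_n`-path: a word of length `2n` over the alphabet `{r, f}` (here `true` stands
for `r` and `false` for `f`) such that every prefix contains at least as many `r`'s
as `f`'s. -/
def BPaths (n : ℕ) : Finset (Fin (2*n) → Bool) :=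
  Finset.univ.filter fun w =>
    ∀ m : Fin (2*n + 1),
      (Finset.univ.filter fun i : Fin (2*n) => (i : ℕ) < (m : ℕ) ∧ w i = false).card ≤
      (Finset.univ.filter fun i : Fin (2*n) => (i : ℕ) < (m : ℕ) ∧ w i = true).card

/-- prefix condition -/
def BGood (l : List Bool) : Prop :=
  ∀ i, ((l.take i).count false) ≤ (l.take i).count true

instance : DecidablePred BGood := fun l =>
  decidable_of_iff (∀ i ≤ l.length, ((l.take i).count false) ≤ (l.take i).count true) (by
    constructor
    · intro h i
      rcases le_or_gt i l.length with h' | h'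
      · exact h i h'
      · have := h l.length le_rfl
        simpa [List.take_of_length_le h'.le] using this
    · intro h i _
      exact h i)

lemma bgood_concat {l : List Bool} {b : Bool} :
    BGood (l ++ [b]) ↔ BGood l ∧ (l ++ [b]).count false ≤ (l ++ [b]).count true := by
  constructor
  · intro h
    refine ⟨fun i => ?_, ?_⟩
    · rcases le_or_gt i l.length with h' | h'
      · have := h i
        rwa [List.take_append_of_le_length h'] at this
      · have := h l.length
        rw [List.take_append_of_le_length le_rfl, List.take_length] at this
        simpa [List.take_of_length_le h'.le] using this
    · have := h (l.length + 1)
      simpa [List.take_of_length_le] using this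
  · rintro ⟨h1, h2⟩ i
    rcases le_or_gt i l.length with h' | h'
    · rw [List.take_append_of_le_length h']
      exact h1 i
    · rw [List.take_of_length_le (by simp; omega)]
      exact h2

lemma bgood_count {l : List Bool} (h : BGood l) : l.count false ≤ l.count true := by
  have := h l.length
  simpa using this

lemma bgood_concat_true {l : List Bool} : BGood (l ++ [true]) ↔ BGood l := by
  rw [bgood_concat]
  refine ⟨And.left, fun h => ⟨h, ?_⟩⟩
  have := bgood_count h
  simp [List.count_append]
  omega

lemma bgood_concat_false {l : List Bool} :
    BGood (l ++ [false]) ↔ BGood l ∧ l.count false < l.count true := by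
  rw [bgood_concat]
  simp [List.count_append]

lemma bgood_take {l : List Bool} (h : BGood l) (k : ℕ) : BGood (l.take k) := by
  intro i
  rw [List.take_take]
  exact h _

/-- the subtype of good words of length `m` -/
abbrev LSub (m : ℕ) := {l : List Bool // l.length = m ∧ BGood l}

/-- good balanced words (Dyck words) of length `m` -/
abbrev ZSub (m : ℕ) := {l : List Bool // (l.length = m ∧ BGood l) ∧ l.count true = l.count false}

def lsubEquivFn (m : ℕ) : {w : Fin m → Bool // BGood (List.ofFn w)} ≃ LSub m where
  toFun w := ⟨List.ofFn w.1, by simp, w.2⟩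
  invFun l := ⟨fun i => l.1.get (Fin.cast l.2.1.symm i), by
    rcases l with ⟨l, hl, hg⟩
    simp only
    convert hg using 2
    subst hl
    simp [List.ofFn_get]⟩
  left_inv w := by
    ext i
    simp
  right_inv l := by
    rcases l with ⟨l, hl, hg⟩
    subst hl
    simp [List.ofFn_get]

instance instFintypeLSub (m : ℕ) : Fintype (LSub m) := Fintype.ofEquiv _ (lsubEquivFn m)

instance instFintypeZSub (m : ℕ) : Fintype (ZSub m) :=
  Fintype.ofEquiv {x : LSub m // x.1.count true = x.1.count false}
    { toFun := fun x => ⟨x.1.1, ⟨x.1.2, x.2⟩⟩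
      invFun := fun x => ⟨⟨x.1, x.2.1⟩, x.2.2⟩
      left_inv := fun x => rfl
      right_inv := fun x => rfl }

lemma count_take_ofFn {N : ℕ} (w : Fin N → Bool) (b : Bool) :
    ∀ m, m ≤ N → ((List.ofFn w).take m).count b =
      (Finset.univ.filter fun i : Fin N => (i : ℕ) < m ∧ w i = b).card := by
  intro m
  induction m with
  | zero => intro _; simp
  | succ m ih =>
    intro hm
    have hm' : m < N := hm
    have hlt : m < (List.ofFn w).length := by simpa using hm'
    rw [List.take_succ, List.count_append, ih (le_of_lt hm')]
    have hget : (List.ofFn w)[m]? = some (w ⟨m, hm'⟩) := by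
      rw [List.getElem?_eq_getElem hlt]
      simp
    have hfil : (Finset.univ.filter fun i : Fin N => (i : ℕ) < m + 1 ∧ w i = b) =
        (Finset.univ.filter fun i : Fin N => (i : ℕ) < m ∧ w i = b) ∪
          (if w ⟨m, hm'⟩ = b then {⟨m, hm'⟩} else ∅) := by
      ext i
      by_cases hw : w ⟨m, hm'⟩ = b
      · simp only [Finset.mem_filter, Finset.mem_union, Finset.mem_singleton, hw, if_true,
          Finset.mem_univ, true_and]
        constructor
        · rintro ⟨h1, h2⟩
          rcases Nat.lt_succ_iff_lt_or_eq.mp h1 with h | h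
          · exact Or.inl ⟨h, h2⟩
          · exact Or.inr (Fin.ext (by simpa using h))
        · rintro (⟨h1, h2⟩ | rfl)
          · exact ⟨Nat.lt_succ_of_lt h1, h2⟩
          · exact ⟨Nat.lt_succ_self m, hw⟩
      · simp only [Finset.mem_filter, Finset.mem_union, hw, if_false,
          Finset.mem_univ, true_and, Finset.notMem_empty, or_false]
        constructor
        · rintro ⟨h1, h2⟩
          rcases Nat.lt_succ_iff_lt_or_eq.mp h1 with h | h
          · exact ⟨h, h2⟩
          · exact absurd h2 (by rw [Fin.ext (show (i:ℕ) = ((⟨m, hm'⟩ : Fin N):ℕ) from h)]; exact hw)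
        · rintro ⟨h1, h2⟩
          exact ⟨Nat.lt_succ_of_lt h1, h2⟩
    rw [hfil, Finset.card_union_of_disjoint]
    · congr 1
      rw [hget]
      by_cases hw : w ⟨m, hm'⟩ = b
      · simp [hw]
      · rw [if_neg hw]
        simp only [Option.toList_some, Finset.card_empty]
        rcases b <;> rcases hwe : w ⟨m, hm'⟩ <;> simp_all
    · by_cases hw : w ⟨m, hm'⟩ = b <;>
        simp [hw, Finset.disjoint_singleton_right]

lemma bpaths_iff {n : ℕ} (w : Fin (2*n) → Bool) :
    (∀ m : Fin (2*n + 1),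
      (Finset.univ.filter fun i : Fin (2*n) => (i : ℕ) < (m : ℕ) ∧ w i = false).card ≤
      (Finset.univ.filter fun i : Fin (2*n) => (i : ℕ) < (m : ℕ) ∧ w i = true).card) ↔
    BGood (List.ofFn w) := by
  constructor
  · intro h i
    rcases le_or_gt i (2*n) with h' | h'
    · rw [count_take_ofFn w false i h', count_take_ofFn w true i h']
      exact h ⟨i, by omega⟩
    · rw [List.take_of_length_le (by simpa using h'.le),
        ← List.take_length (l := List.ofFn w)]
      simp only [List.length_ofFn]
      rw [count_take_ofFn w false (2*n) le_rfl, count_take_ofFn w true (2*n) le_rfl]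
      exact h ⟨2*n, by omega⟩
  · intro h m
    rw [← count_take_ofFn w false m (by omega), ← count_take_ofFn w true m (by omega)]
    exact h m

lemma card_bpaths (n : ℕ) : (BPaths n).card = Fintype.card (LSub (2*n)) := by
  rw [BPaths, ← Fintype.card_subtype]
  exact Fintype.card_congr ((Equiv.subtypeEquivRight fun w => bpaths_iff w).trans
    (lsubEquivFn (2*n)))

/-- forward map of the recursion bijection -/
def stepFwd (m : ℕ) : LSub (m+1) ⊕ ZSub m → LSub m × Bool
  | .inl l =>
      (⟨l.1.dropLast, by simp [l.2.1], by
          rw [List.dropLast_eq_take]; exact bgood_take l.2.2 _⟩,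
        l.1.getLast (by intro h; have hl := l.2.1; rw [h] at hl; simp at hl))
  | .inr l => (⟨l.1, l.2.1⟩, false)

/-- backward map of the recursion bijection -/
def stepBwd (m : ℕ) : LSub m × Bool → LSub (m+1) ⊕ ZSub m := fun x =>
  if hb : x.2 = true then
    .inl ⟨x.1.1 ++ [true], by simp [x.1.2.1], bgood_concat_true.mpr x.1.2.2⟩
  else if hbal : x.1.1.count true = x.1.1.count false then
    .inr ⟨x.1.1, x.1.2, hbal⟩
  else
    .inl ⟨x.1.1 ++ [false], by simp [x.1.2.1], bgood_concat_false.mpr ⟨x.1.2.2, by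
      have := bgood_count x.1.2.2
      omega⟩⟩

def stepEquiv (m : ℕ) : LSub (m+1) ⊕ ZSub m ≃ LSub m × Bool where
  toFun := stepFwd m
  invFun := stepBwd m
  left_inv x := by
    rcases x with ⟨l, hlen, hg⟩ | ⟨l, ⟨hlen, hg⟩, hbal⟩
    · have hne : l ≠ [] := by rintro rfl; simp at hlen
      have hdg : l.dropLast ++ [l.getLast hne] = l := List.dropLast_append_getLast hne
      rcases hb : l.getLast hne with _ | _
      · -- last letter is false
        have hg' : BGood (l.dropLast ++ [false]) := by rw [← hb, hdg]; exact hg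
        have hlt := (bgood_concat_false.mp hg').2
        simp only [stepFwd, stepBwd, hb, Bool.false_eq_true, dite_false]
        rw [dif_neg (by omega)]
        congr 1
        ext1
        simpa [← hb] using hdg
      · simp only [stepFwd, stepBwd, hb, dite_true]
        congr 1
        ext1
        simpa [← hb] using hdg
    · have : l.count true ≠ l.count false → False := fun h => h hbal
      simp only [stepFwd, stepBwd, Bool.false_eq_true, dite_false]
      simp [hbal]
  right_inv x := by
    rcases x with ⟨⟨l, hlen, hg⟩, b⟩
    rcases b with _ | _
    · -- b = false
      by_cases hbal : l.count true = l.count false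
      · simp only [stepBwd, Bool.false_eq_true, dite_false]
        rw [dif_pos hbal]
        rfl
      · simp only [stepBwd, Bool.false_eq_true, dite_false]
        rw [dif_neg hbal]
        simp only [stepFwd]
        refine Prod.ext ?_ ?_
        · ext1
          simp
        · simp [List.getLast_concat]
    · simp only [stepBwd, dite_true, stepFwd]
      refine Prod.ext ?_ ?_
      · ext1
        simp
      · simp [List.getLast_concat]

lemma card_step (m : ℕ) :
    Fintype.card (LSub (m+1)) + Fintype.card (ZSub m) = 2 * Fintype.card (LSub m) := by
  have := Fintype.card_congr (stepEquiv m)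
  rw [Fintype.card_sum, Fintype.card_prod, Fintype.card_bool] at this
  omega

lemma zsub_odd (n : ℕ) : Fintype.card (ZSub (2*n+1)) = 0 := by
  rw [Fintype.card_eq_zero_iff]
  constructor
  rintro ⟨l, ⟨hlen, -⟩, hbal⟩
  have := List.count_add_count_not l true
  simp only [Bool.not_true] at this
  omega

open DyckStep in
/-- booleans to Dyck steps -/
def toStep : Bool → DyckStep := fun b => if b then U else D

lemma toStep_injective : Function.Injective toStep := by
  intro a b h
  cases a <;> cases b <;> simp [toStep] at h ⊢ <;> exact h

open DyckStep in
def zsubEquivDyck (n : ℕ) : ZSub (2*n) ≃ {p : DyckWord // p.semilength = n} where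
  toFun l := by
    refine ⟨⟨l.1.map toStep, ?_, ?_⟩, ?_⟩
    · rw [show U = toStep true from rfl, show D = toStep false from rfl,
        List.count_map_of_injective _ _ toStep_injective,
        List.count_map_of_injective _ _ toStep_injective]
      exact l.2.2
    · intro i
      rw [← List.map_take, show U = toStep true from rfl, show D = toStep false from rfl,
        List.count_map_of_injective _ _ toStep_injective,
        List.count_map_of_injective _ _ toStep_injective]
      exact l.2.1.2 i
    · have h1 := l.2.2
      have h2 := List.count_add_count_not l.1 true
      simp only [Bool.not_true] at h2
      have h3 := l.2.1.1
      show (l.1.map toStep).count U = n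
      rw [show U = toStep true from rfl,
        List.count_map_of_injective _ _ toStep_injective]
      omega
  invFun p := by
    refine ⟨p.1.toList.map (fun s => s = U), ⟨?_, ?_⟩, ?_⟩
    · rw [List.length_map, ← p.1.two_mul_semilength_eq_length, p.2]
    · intro i
      rw [← List.map_take]
      have hf : ∀ (l' : List DyckStep) (b : Bool),
          (l'.map (fun s => decide (s = U))).count b = l'.count (if b then U else D) := by
        intro l' b
        induction l' with
        | nil => simp
        | cons s t ih =>
          cases s <;> cases b <;> simp [List.count_cons, ih]
      rw [hf, hf]
      exact p.1.count_D_le_count_U i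
    · have hf : ∀ (l' : List DyckStep) (b : Bool),
          (l'.map (fun s => decide (s = U))).count b = l'.count (if b then U else D) := by
        intro l' b
        induction l' with
        | nil => simp
        | cons s t ih =>
          cases s <;> cases b <;> simp [List.count_cons, ih]
      rw [hf, hf]
      simpa using p.1.count_U_eq_count_D
  left_inv l := by
    ext1
    simp only [List.map_map]
    rw [show ((fun s => decide (s = U)) ∘ toStep) = id from ?_, List.map_id]
    funext b
    cases b <;> simp [toStep]
  right_inv p := by
    ext1
    ext1
    simp only [List.map_map]
    rw [show (toStep ∘ (fun s => decide (s = U))) = id from ?_, List.map_id]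
    funext s
    cases s <;> simp [toStep]

lemma zsub_even (n : ℕ) : Fintype.card (ZSub (2*n)) = catalan n := by
  rw [Fintype.card_congr (zsubEquivDyck n)]
  exact DyckWord.card_dyckWord_semilength_eq_catalan n

/-- The number of `B_{n+1}`-paths equals four times the number of `B_n`-paths minus
twice the `n`-th Catalan number `C(2n, n)/(n+1)`. -/
theorem card_BPaths_succ (n : ℕ) (hn : 1 ≤ n) :
    ((BPaths (n+1)).card : ℚ) =
      4 * ((BPaths n).card : ℚ) - 2 * (((2*n).choose n : ℚ) / ((n : ℚ) + 1)) := by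
  have e1 : (BPaths (n+1)).card = Fintype.card (LSub (2*n+2)) := by
    rw [card_bpaths, show 2*(n+1) = 2*n+2 by ring]
  have e0 : (BPaths n).card = Fintype.card (LSub (2*n)) := card_bpaths n
  have h1 := card_step (2*n+1)
  rw [show 2*n+1+1 = 2*n+2 from rfl] at h1
  have h2 := card_step (2*n)
  rw [zsub_odd n] at h1
  rw [zsub_even n] at h2
  have hcat : ((n : ℚ) + 1) * catalan n = (2*n).choose n := by
    have := succ_mul_catalan_eq_centralBinom n
    have h' : (n+1) * catalan n = (2*n).choose n := this
    exact_mod_cast h'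
  have hne : ((n : ℚ) + 1) ≠ 0 := by positivity
  have hdiv : (((2*n).choose n : ℚ)) / ((n : ℚ) + 1) = catalan n := by
    rw [← hcat]
    field_simp
  rw [e1, e0, hdiv]
  have h1n : Fintype.card (LSub (2*n+2)) = 2 * Fintype.card (LSub (2*n+1)) := by omega
  have h1' : (Fintype.card (LSub (2*n+2)) : ℚ) = 2 * Fintype.card (LSub (2*n+1)) := by
    exact_mod_cast h1n
  have h2' : (Fintype.card (LSub (2*n+1)) : ℚ) + catalan n = 2 * Fintype.card (LSub (2*n)) := by
    exact_mod_cast h2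
  rw [h1']
  linarith
end

section
/- For every integer n ≥ 1, consider the finite poset P_n whose elements are the pairs (i,j) of integers with 1 ≤ i ≤ j and j ≤ 2n − i, partially ordered by (i,j) ⪯ (i',j') if and only if i' ≤ i and j ≤ j'. The number of upper sets (coideals) of P_n equals C(2n, n). (P_n is the poset of positive roots of the root system of type B_n, and its upper sets correspond bijectively to the ad-nilpotent ideals of the Borel subalgebra.) -/
/-- The ground set of the poset `P_n` of positive roots of the root system of type
`B_n`: pairs `(i, j)` of integers with `1 ≤ i ≤ j` and `j ≤ 2n - i` (equivalently,
`i + j ≤ 2n`). The partial order is `(i,j) ⪯ (i',j') ↔ i' ≤ i ∧ j ≤ j'`. -/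
def rootPosetB (n : ℕ) : Finset (ℕ × ℕ) :=
  (Finset.Icc 1 (2*n) ×ˢ Finset.Icc 1 (2*n)).filter fun p =>
    p.1 ≤ p.2 ∧ p.1 + p.2 ≤ 2*n

open Finset

open Finset

/-- number of elements of `B` that are `≤ t` -/
def cnt (B : Finset ℕ) (t : ℕ) : ℕ := (B.filter (fun x => x ≤ t)).card

/-- ballot condition -/
def Good (B : Finset ℕ) : Prop := ∀ b ∈ B, 2 * cnt B b ≤ b

instance : DecidablePred Good := fun B => by unfold Good; infer_instance

lemma cnt_mono (B : Finset ℕ) {t u : ℕ} (h : t ≤ u) : cnt B t ≤ cnt B u := by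
  apply Finset.card_le_card
  intro x hx
  simp only [mem_filter] at hx ⊢
  exact ⟨hx.1, hx.2.trans h⟩

lemma cnt_le (B : Finset ℕ) {u t : ℕ} (h : u ≤ t) : cnt B t ≤ cnt B u + (t - u) := by
  have hsub : B.filter (fun x => x ≤ t) ⊆ B.filter (fun x => x ≤ u) ∪ Icc (u+1) t := by
    intro x hx
    simp only [mem_filter, mem_union, mem_Icc] at hx ⊢
    rcases Nat.lt_or_ge u x with h' | h'
    · exact Or.inr ⟨by omega, hx.2⟩
    · exact Or.inl ⟨hx.1, h'⟩
  calc cnt B t ≤ (B.filter (fun x => x ≤ u) ∪ Icc (u+1) t).card := Finset.card_le_card hsub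
    _ ≤ cnt B u + (Icc (u+1) t).card := Finset.card_union_le _ _
    _ = cnt B u + (t - u) := by rw [Nat.card_Icc]; omega

lemma cnt_pred {B : Finset ℕ} {b : ℕ} (hb : b ∈ B) (h1 : 1 ≤ b) :
    cnt B (b-1) + 1 ≤ cnt B b := by
  have : insert b (B.filter (fun x => x ≤ b - 1)) ⊆ B.filter (fun x => x ≤ b) := by
    intro x hx
    simp only [mem_insert, mem_filter] at hx ⊢
    rcases hx with rfl | h
    · exact ⟨hb, le_refl _⟩
    · exact ⟨h.1, by omega⟩
  have hnot : b ∉ B.filter (fun x => x ≤ b - 1) := by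
    simp only [mem_filter]; omega
  calc cnt B (b-1) + 1 = (insert b (B.filter (fun x => x ≤ b-1))).card := by
        rw [Finset.card_insert_of_notMem hnot]; rfl
    _ ≤ cnt B b := Finset.card_le_card this

lemma cnt_jump {B : Finset ℕ} {t : ℕ} (h : cnt B (t-1) < cnt B t) : t ∈ B := by
  by_contra ht
  have : B.filter (fun x => x ≤ t) ⊆ B.filter (fun x => x ≤ t - 1) := by
    intro x hx
    simp only [mem_filter] at hx ⊢
    refine ⟨hx.1, ?_⟩
    rcases Nat.lt_or_ge x t with h' | h'
    · omega
    · exact absurd hx.1 (by have : x = t := le_antisymm hx.2 h'; subst this; exact ht)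
  have h2 := Finset.card_le_card this
  unfold cnt at h
  omega

lemma good_all {B : Finset ℕ} (hB : Good B) (t : ℕ) : 2 * cnt B t ≤ t := by
  rcases Finset.eq_empty_or_nonempty (B.filter (fun x => x ≤ t)) with he | hne
  · unfold cnt; rw [he]; simp
  · set b := (B.filter (fun x => x ≤ t)).max' hne with hbdef
    have hbmem := (B.filter (fun x => x ≤ t)).max'_mem hne
    simp only [mem_filter] at hbmem
    have heq : B.filter (fun x => x ≤ t) = B.filter (fun x => x ≤ b) := by
      apply Finset.Subset.antisymm
      · intro x hx
        simp only [mem_filter] at hx ⊢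
        exact ⟨hx.1, Finset.le_max' _ x (by simp only [mem_filter]; exact hx)⟩
      · intro x hx
        simp only [mem_filter] at hx ⊢
        exact ⟨hx.1, hx.2.trans hbmem.2⟩
    have := hB b hbmem.1
    unfold cnt at *
    rw [heq]
    omega

/-- number of ballot subsets of `[1,m]` of size `k` -/
def tk (m k : ℕ) : ℕ :=
  (((Icc 1 m).powerset.filter (fun B => Good B ∧ B.card = k))).card

lemma cnt_eq_card {B : Finset ℕ} {m : ℕ} (hB : B ⊆ Icc 1 m) {t : ℕ} (ht : m ≤ t) :
    cnt B t = B.card := by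
  unfold cnt
  congr 1
  apply Finset.filter_true_of_mem
  intro x hx
  have := hB hx
  simp only [mem_Icc] at this
  omega

lemma tk_zero (m : ℕ) : tk m 0 = 1 := by
  unfold tk
  rw [show (((Icc 1 m).powerset.filter (fun B => Good B ∧ B.card = 0))) = {∅} from ?_]
  · simp
  · apply Finset.Subset.antisymm
    · intro B hB
      simp only [mem_filter, Finset.card_eq_zero] at hB
      simp [hB.2.2]
    · intro B hB
      simp only [Finset.mem_singleton] at hB
      subst hB
      simp only [mem_filter, Finset.mem_powerset]
      refine ⟨Finset.empty_subset _, ?_, rfl⟩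
      intro b hb; simp at hb

lemma tk_eq_zero {m k : ℕ} (h : m < 2 * k) : tk m k = 0 := by
  unfold tk
  rw [Finset.card_eq_zero, Finset.filter_eq_empty_iff]
  rintro B hB ⟨hg, hc⟩
  simp only [Finset.mem_powerset] at hB
  have hk : 1 ≤ k := by omega
  have hne : B.Nonempty := by rw [← Finset.card_pos]; omega
  set b := B.max' hne
  have hbB : b ∈ B := B.max'_mem hne
  have hbm : b ≤ m := by have := hB hbB; simp only [mem_Icc] at this; omega
  have := hg b hbB
  have hB' : B ⊆ Icc 1 b := by
    intro x hx
    have h1 := hB hx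
    simp only [mem_Icc] at h1 ⊢
    exact ⟨h1.1, Finset.le_max' _ x hx⟩
  rw [cnt_eq_card hB' (le_refl b)] at this
  omega

lemma good_insert {B : Finset ℕ} {m : ℕ} (hB : B ⊆ Icc 1 m) :
    Good (insert (m+1) B) ↔ Good B ∧ 2 * (B.card + 1) ≤ m + 1 := by
  have hnm : (m+1) ∉ B := fun h => by have := hB h; simp only [mem_Icc] at this; omega
  have hcnt : ∀ t ≤ m, cnt (insert (m+1) B) t = cnt B t := by
    intro t ht
    unfold cnt
    rw [Finset.filter_insert, if_neg (by omega)]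
  have hcnt2 : cnt (insert (m+1) B) (m+1) = B.card + 1 := by
    unfold cnt
    rw [Finset.filter_insert, if_pos (le_refl _), Finset.card_insert_of_notMem
      (fun h => hnm (Finset.mem_of_mem_filter _ h))]
    congr 1
    exact cnt_eq_card hB (by omega)
  constructor
  · intro hg
    refine ⟨?_, ?_⟩
    · intro b hb
      have hbm : b ≤ m := by have := hB hb; simp only [mem_Icc] at this; omega
      have := hg b (Finset.mem_insert_of_mem hb)
      rwa [hcnt b hbm] at this
    · have := hg (m+1) (Finset.mem_insert_self _ _)
      rwa [hcnt2] at this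
  · rintro ⟨hg, hle⟩ b hb
    rcases Finset.mem_insert.mp hb with rfl | hb'
    · rw [hcnt2]; exact hle
    · have hbm : b ≤ m := by have := hB hb'; simp only [mem_Icc] at this; omega
      rw [hcnt b hbm]
      exact hg b hb'

lemma tk_succ (m k : ℕ) :
    tk (m+1) (k+1) = tk m (k+1) + (if 2*(k+1) ≤ m+1 then tk m k else 0) := by
  classical
  set F := (Icc 1 (m+1)).powerset.filter (fun B => Good B ∧ B.card = k+1) with hF
  have hsplit := Finset.card_filter_add_card_filter_not
    (s := F) (p := fun B => (m+1) ∈ B)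
  have h1 : F.filter (fun B => ¬ (m+1) ∈ B)
      = (Icc 1 m).powerset.filter (fun B => Good B ∧ B.card = k+1) := by
    ext B
    simp only [hF, mem_filter, Finset.mem_powerset]
    constructor
    · rintro ⟨⟨hsub, hp⟩, hnm⟩
      refine ⟨?_, hp⟩
      intro x hx
      have := hsub hx
      simp only [mem_Icc] at this ⊢
      have : x ≠ m+1 := fun h => hnm (h ▸ hx)
      omega
    · rintro ⟨hsub, hp⟩
      have hnm : (m+1) ∉ B := fun h => by
        have := hsub h; simp only [mem_Icc] at this; omega
      exact ⟨⟨hsub.trans (Icc_subset_Icc_right (by omega)), hp⟩, hnm⟩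
  have h2 : (F.filter (fun B => (m+1) ∈ B)).card
      = if 2*(k+1) ≤ m+1 then tk m k else 0 := by
    split_ifs with hcond
    · unfold tk
      rw [show F.filter (fun B => (m+1) ∈ B)
          = ((Icc 1 m).powerset.filter (fun B => Good B ∧ B.card = k)).image
              (insert (m+1)) from ?_]
      · apply Finset.card_image_of_injOn
        intro B1 hB1 B2 hB2 heq
        rw [Finset.mem_coe, mem_filter, Finset.mem_powerset] at hB1 hB2
        have hn1 : (m+1) ∉ B1 := fun h => by
          have := hB1.1 h; simp only [mem_Icc] at this; omega
        have hn2 : (m+1) ∉ B2 := fun h => by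
          have := hB2.1 h; simp only [mem_Icc] at this; omega
        have h := congrArg (fun s => Finset.erase s (m+1)) heq
        simp only [Finset.erase_insert hn1, Finset.erase_insert hn2] at h
        exact h
      · ext B
        simp only [hF, mem_filter, Finset.mem_powerset, Finset.mem_image]
        constructor
        · rintro ⟨⟨hsub, hg, hc⟩, hmem⟩
          refine ⟨B.erase (m+1), ⟨?_, ?_, ?_⟩, ?_⟩
          · intro x hx
            have hx1 := Finset.mem_of_mem_erase hx
            have hx2 := Finset.ne_of_mem_erase hx
            have := hsub hx1
            simp only [mem_Icc] at this ⊢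
            omega
          · have hBeq : B = insert (m+1) (B.erase (m+1)) :=
              (Finset.insert_erase hmem).symm
            have hsub' : B.erase (m+1) ⊆ Icc 1 m := by
              intro x hx
              have hx1 := Finset.mem_of_mem_erase hx
              have hx2 := Finset.ne_of_mem_erase hx
              have := hsub hx1
              simp only [mem_Icc] at this ⊢
              omega
            rw [hBeq] at hg
            exact ((good_insert hsub').mp hg).1
          · rw [Finset.card_erase_of_mem hmem, hc]; rfl
          · exact Finset.insert_erase hmem
        · rintro ⟨B', ⟨hsub', hg', hc'⟩, rfl⟩
          have hnm : (m+1) ∉ B' := fun h => by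
            have := hsub' h; simp only [mem_Icc] at this; omega
          refine ⟨⟨?_, ?_, ?_⟩, Finset.mem_insert_self _ _⟩
          · intro x hx
            rcases Finset.mem_insert.mp hx with rfl | hx'
            · simp only [mem_Icc]; omega
            · have := hsub' hx'
              simp only [mem_Icc] at this ⊢
              omega
          · exact (good_insert hsub').mpr ⟨hg', by omega⟩
          · rw [Finset.card_insert_of_notMem hnm, hc']
    · rw [Finset.card_eq_zero, Finset.filter_eq_empty_iff]
      rintro B hB hmem
      simp only [hF, mem_filter, Finset.mem_powerset] at hB
      obtain ⟨hsub, hg, hc⟩ := hB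
      have := hg (m+1) hmem
      rw [cnt_eq_card hsub (le_refl _)] at this
      omega
  have h3 : tk (m+1) (k+1) = F.card := rfl
  rw [h3, ← hsplit, h2, h1]
  unfold tk
  omega

lemma sum_tk : ∀ m K, 2*K ≤ m+1 → ∑ k ∈ Finset.range (K+1), tk m k = m.choose K := by
  intro m
  induction m with
  | zero =>
    intro K hK
    have : K = 0 := by omega
    subst this
    simp [tk_zero]
  | succ m ih =>
    intro K
    induction K with
    | zero => intro _; simp [tk_zero]
    | succ K ihK =>
      intro hK
      rw [Finset.sum_range_succ, ihK (by omega)]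
      rcases Nat.lt_or_ge (m+1) (2*(K+1)) with hc | hc
      · rw [tk_eq_zero (by omega)]
        have hm : m + 1 = 2*K + 1 := by omega
        rw [hm, Nat.add_zero,
          show (2*K+1).choose (K+1) = (2*K+1).choose ((2*K+1) - (K+1)) from
            (Nat.choose_symm (by omega)).symm,
          show (2*K+1) - (K+1) = K from by omega]
      · rw [tk_succ, if_pos hc]
        have e1 : ∑ k ∈ Finset.range (K+2), tk m k = m.choose (K+1) := ih (K+1) (by omega)
        have e2 : ∑ k ∈ Finset.range (K+1), tk m k = m.choose K := ih K (by omega)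
        rw [Finset.sum_range_succ, e2] at e1
        have pasc1 : (m+1).choose (K+1) = m.choose K + m.choose (K+1) :=
          Nat.choose_succ_succ m K
        rcases K with _ | K'
        · have h0 := tk_zero m
          simp only [Nat.choose_zero_right, Nat.choose_one_right] at *
          omega
        · have e3 : ∑ k ∈ Finset.range (K'+2), tk m k = m.choose (K'+1) := ih (K'+1) (by omega)
          have e4 : ∑ k ∈ Finset.range (K'+1), tk m k = m.choose K' := ih K' (by omega)
          rw [Finset.sum_range_succ, e4] at e3
          have pasc2 : (m+1).choose (K'+1) = m.choose K' + m.choose (K'+1) :=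
            Nat.choose_succ_succ m K'
          omega

lemma card_good (m : ℕ) (hm : 2 ∣ m) :
    ((Icc 1 m).powerset.filter Good).card = m.choose (m/2) := by
  obtain ⟨n, rfl⟩ := hm
  have hfib : ((Icc 1 (2*n)).powerset.filter Good).card
      = ∑ k ∈ Finset.range (2*n+1),
          (((Icc 1 (2*n)).powerset.filter Good).filter (fun B => B.card = k)).card := by
    apply Finset.card_eq_sum_card_fiberwise
    intro B hB
    simp only [Finset.mem_coe, mem_filter, Finset.mem_powerset] at hB ⊢
    rw [Finset.mem_range]
    have := Finset.card_le_card hB.1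
    rw [Nat.card_Icc] at this
    omega
  rw [hfib]
  have heq : ∀ k, (((Icc 1 (2*n)).powerset.filter Good).filter (fun B => B.card = k)).card
      = tk (2*n) k := by
    intro k
    unfold tk
    rw [Finset.filter_filter]
  simp only [heq]
  have hzero : ∀ k ∈ Finset.range (2*n+1), k ∉ Finset.range (n+1) → tk (2*n) k = 0 := by
    intro k _ hk2
    rw [Finset.mem_range] at hk2
    exact tk_eq_zero (by omega)
  rw [← Finset.sum_subset (by intro x hx; rw [Finset.mem_range] at hx ⊢; omega) hzero]
  rw [sum_tk (2*n) n (by omega)]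
  congr 1
  omega

lemma mem_rootPosetB {n : ℕ} {p : ℕ × ℕ} :
    p ∈ rootPosetB n ↔ 1 ≤ p.1 ∧ p.1 ≤ p.2 ∧ p.1 + p.2 ≤ 2*n := by
  unfold rootPosetB
  simp only [Finset.mem_filter, Finset.mem_product, Finset.mem_Icc]
  omega

/-- minimum of row `i` of `S` -/
noncomputable def mrow (S : Finset (ℕ × ℕ)) (i : ℕ) : ℕ := sInf {j | (i, j) ∈ S}

def phi (S : Finset (ℕ × ℕ)) : Finset ℕ :=
  (S.filter fun p => (p.1, p.2 - 1) ∉ S).image fun p => p.1 + p.2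

def psi (n : ℕ) (B : Finset ℕ) : Finset (ℕ × ℕ) :=
  (rootPosetB n).filter fun p => p.1 ≤ cnt B (p.1 + p.2)

section rows

variable {n : ℕ} {S : Finset (ℕ × ℕ)}
variable (hS : S ⊆ rootPosetB n)
variable (hup : ∀ p ∈ S, ∀ q ∈ rootPosetB n, q.1 ≤ p.1 → p.2 ≤ q.2 → q ∈ S)

lemma mrow_le {i j : ℕ} (h : (i, j) ∈ S) : mrow S i ≤ j := Nat.sInf_le h

lemma mrow_mem {i j : ℕ} (h : (i, j) ∈ S) : (i, mrow S i) ∈ S := by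
  have h2 : sInf {j | (i, j) ∈ S} ∈ {j | (i, j) ∈ S} := Nat.sInf_mem ⟨j, h⟩
  exact h2

include hS in
lemma row_bounds {i j : ℕ} (h : (i, j) ∈ S) : 1 ≤ i ∧ i ≤ j ∧ i + j ≤ 2*n :=
  mem_rootPosetB.mp (hS h)

include hS in
lemma mrow_pred_not_mem {i j : ℕ} (h : (i, j) ∈ S) : (i, mrow S i - 1) ∉ S := by
  intro hc
  have h1 := mrow_le hc
  have h2 := row_bounds hS (mrow_mem h)
  omega

include hS hup in
lemma eq_mrow_of_pred_not_mem {i j : ℕ} (h : (i, j) ∈ S) (hnot : (i, j - 1) ∉ S) :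
    j = mrow S i := by
  have h1 := mrow_le h
  rcases Nat.eq_or_lt_of_le h1 with he | hlt
  · omega
  · exfalso
    apply hnot
    have hm := mrow_mem h
    have hb := row_bounds hS hm
    refine hup _ hm (i, j-1) ?_ (le_refl i) (by omega)
    rw [mem_rootPosetB]
    have hb2 := row_bounds hS h
    refine ⟨by omega, by omega, by omega⟩

include hS hup in
lemma mrow_mono {i₁ i₂ j₂ : ℕ} (h2 : (i₂, j₂) ∈ S) (h1 : 1 ≤ i₁) (hle : i₁ ≤ i₂) :
    (i₁, mrow S i₁) ∈ S ∧ mrow S i₁ ≤ mrow S i₂ := by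
  have hm2 := mrow_mem h2
  have hb2 := row_bounds hS hm2
  have hmem : (i₁, mrow S i₂) ∈ S := by
    refine hup _ hm2 (i₁, mrow S i₂) ?_ hle (le_refl _)
    rw [mem_rootPosetB]
    refine ⟨h1, by omega, by omega⟩
  exact ⟨mrow_mem hmem, mrow_le hmem⟩

include hS hup in
lemma phi_good : phi S ∈ (Icc 1 (2*n)).powerset.filter Good := by
  rw [mem_filter, Finset.mem_powerset]
  constructor
  · intro x hx
    rw [phi, Finset.mem_image] at hx
    obtain ⟨p, hp, rfl⟩ := hx
    rw [mem_filter] at hp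
    have := row_bounds hS hp.1
    rw [mem_Icc]
    omega
  · intro b _
    have hsub2 : (phi S).filter (fun x => x ≤ b)
        ⊆ (Icc 1 (b/2)).image (fun i => i + mrow S i) := by
      intro x hx
      rw [mem_filter] at hx
      obtain ⟨hx1, hx2⟩ := hx
      rw [phi, Finset.mem_image] at hx1
      obtain ⟨⟨i, j⟩, hp, rfl⟩ := hx1
      rw [mem_filter] at hp
      have heq : j = mrow S i := eq_mrow_of_pred_not_mem hS hup hp.1 hp.2
      have hb := row_bounds hS hp.1
      rw [Finset.mem_image]
      exact ⟨i, by rw [mem_Icc]; omega, by omega⟩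
    have h1 := Finset.card_le_card hsub2
    have h2 := Finset.card_image_le (s := Icc 1 (b/2)) (f := fun i => i + mrow S i)
    rw [Nat.card_Icc] at h2
    unfold cnt
    omega

lemma psi_upper {B : Finset ℕ} (hBs : B ⊆ Icc 1 (2*n)) (hBg : Good B) :
    psi n B ∈ (rootPosetB n).powerset.filter fun S =>
      ∀ p ∈ S, ∀ q ∈ rootPosetB n, q.1 ≤ p.1 → p.2 ≤ q.2 → q ∈ S := by
  rw [mem_filter, Finset.mem_powerset]
  refine ⟨Finset.filter_subset _ _, ?_⟩
  rintro ⟨i, j⟩ hp ⟨i', j'⟩ hq hle1 hle2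
  rw [psi, mem_filter] at hp ⊢
  obtain ⟨hpP, hpc⟩ := hp
  refine ⟨hq, ?_⟩
  simp only at hpc hle1 hle2 ⊢
  rcases le_or_gt (i + j) (i' + j') with hc | hc
  · exact le_trans (le_trans hle1 hpc) (cnt_mono B hc)
  · have := cnt_le B (u := i' + j') (t := i + j) (by omega)
    omega

include hS hup in
lemma left_inv : psi n (phi S) = S := by
  ext ⟨i, j⟩
  rw [psi, mem_filter]
  constructor
  · rintro ⟨hP, hc⟩
    simp only at hc
    by_contra hnS
    rw [mem_rootPosetB] at hP
    simp only at hP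
    have hsub3 : (phi S).filter (fun x => x ≤ i + j)
        ⊆ (Icc 1 (i-1)).image (fun i' => i' + mrow S i') := by
      intro x hx
      rw [mem_filter] at hx
      obtain ⟨hx1, hx2⟩ := hx
      rw [phi, Finset.mem_image] at hx1
      obtain ⟨⟨i', j'⟩, hp, rfl⟩ := hx1
      rw [mem_filter] at hp
      have heq : j' = mrow S i' := eq_mrow_of_pred_not_mem hS hup hp.1 hp.2
      have hb := row_bounds hS hp.1
      have hii : i' < i := by
        by_contra hge
        push_neg at hge
        apply hnS
        refine hup _ hp.1 (i, j) ?_ hge (by omega)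
        rw [mem_rootPosetB]
        exact ⟨by omega, by omega, by omega⟩
      rw [Finset.mem_image]
      exact ⟨i', by rw [mem_Icc]; omega, by omega⟩
    have h1 := Finset.card_le_card hsub3
    have h2 := Finset.card_image_le (s := Icc 1 (i-1)) (f := fun i' => i' + mrow S i')
    rw [Nat.card_Icc] at h2
    unfold cnt at hc
    omega
  · intro hmem
    have hb := row_bounds hS hmem
    refine ⟨hS hmem, ?_⟩
    simp only
    have hrow : ∀ i' : ℕ, 1 ≤ i' → i' ≤ i → (i', j) ∈ S := by
      intro i' h1 h2
      refine hup _ hmem (i', j) ?_ h2 (le_refl j)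
      rw [mem_rootPosetB]
      exact ⟨h1, by omega, by omega⟩
    have key : (Icc 1 i).image (fun i' => i' + mrow S i')
        ⊆ (phi S).filter (fun x => x ≤ i + j) := by
      intro x hx
      rw [Finset.mem_image] at hx
      obtain ⟨i', hi', rfl⟩ := hx
      rw [mem_Icc] at hi'
      have hrm : (i', j) ∈ S := hrow i' hi'.1 hi'.2
      have hm := mrow_mem hrm
      have hmle := mrow_le hrm
      rw [mem_filter, phi, Finset.mem_image]
      refine ⟨⟨(i', mrow S i'), ?_, rfl⟩, by omega⟩
      rw [mem_filter]
      exact ⟨hm, mrow_pred_not_mem hS hrm⟩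
    have hinj : Set.InjOn (fun i' => i' + mrow S i') (Icc 1 i : Set ℕ) := by
      intro a ha b hb heq
      simp only [Finset.coe_Icc, Set.mem_Icc] at ha hb
      have heq' : a + mrow S a = b + mrow S b := heq
      by_contra hne
      have haux : ∀ a b : ℕ, 1 ≤ a → a < b → b ≤ i →
          a + mrow S a < b + mrow S b := by
        intro a b h1 h2 h3
        have : (b, mrow S b) ∈ S := mrow_mem (hrow b (by omega) h3)
        have := (mrow_mono hS hup this h1 (le_of_lt h2)).2
        omega
      rcases Nat.lt_or_ge a b with h | h
      · have := haux a b ha.1 h hb.2; omega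
      · have hba : b < a := by omega
        have := haux b a hb.1 hba ha.2; omega
    have h1 := Finset.card_le_card key
    rw [Finset.card_image_of_injOn hinj, Nat.card_Icc] at h1
    unfold cnt
    omega

lemma right_inv {B : Finset ℕ} (hBs : B ⊆ Icc 1 (2*n)) (hBg : Good B) :
    phi (psi n B) = B := by
  ext x
  constructor
  · intro hx
    rw [phi, Finset.mem_image] at hx
    obtain ⟨⟨i, j⟩, hp, rfl⟩ := hx
    rw [mem_filter] at hp
    obtain ⟨hp1, hp2⟩ := hp
    rw [psi, mem_filter, mem_rootPosetB] at hp1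
    simp only at hp1 hp2
    obtain ⟨⟨hi1, hij, hsum⟩, hcnt⟩ := hp1
    apply cnt_jump (t := i + j)
    rcases Nat.eq_or_lt_of_le hij with he | hlt
    · have := good_all hBg (i + j - 1)
      omega
    · have hnot : ¬ (i ≤ cnt B (i + (j - 1))) := by
        intro hc
        apply hp2
        rw [psi, mem_filter, mem_rootPosetB]
        exact ⟨⟨by omega, by omega, by omega⟩, hc⟩
      have : i + (j - 1) = i + j - 1 := by omega
      rw [this] at hnot
      omega
  · intro hx
    have hxb : 1 ≤ x ∧ x ≤ 2*n := by have := hBs hx; rwa [mem_Icc] at this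
    set i := cnt B x with hi
    have hipos : 1 ≤ i := by
      rw [hi]
      unfold cnt
      apply Finset.card_pos.mpr
      exact ⟨x, by rw [mem_filter]; exact ⟨hx, le_refl _⟩⟩
    have h2i : 2 * i ≤ x := hBg x hx
    set j := x - i with hj
    have hji : i + j = x := by omega
    rw [phi, Finset.mem_image]
    refine ⟨(i, j), ?_, by simpa using hji⟩
    rw [mem_filter]
    constructor
    · rw [psi, mem_filter, mem_rootPosetB]
      refine ⟨⟨by omega, by omega, by omega⟩, ?_⟩
      simp only
      rw [hji]
    · simp only
      intro hc
      rw [psi, mem_filter] at hc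
      have hc2 := hc.2
      simp only at hc2
      have he : i + (j - 1) = x - 1 := by omega
      rw [he] at hc2
      have := cnt_pred hx (by omega)
      omega

end rows

/-- The number of upper sets (coideals) of the poset `P_n` of positive roots of type
`B_n` equals `C(2n, n)`. -/
theorem card_upperSets_rootPosetB (n : ℕ) (hn : 1 ≤ n) :
    ((rootPosetB n).powerset.filter fun S =>
        ∀ p ∈ S, ∀ q ∈ rootPosetB n, q.1 ≤ p.1 → p.2 ≤ q.2 → q ∈ S).card =
      (2*n).choose n := by
  classical
  have key : ((rootPosetB n).powerset.filter fun S =>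
        ∀ p ∈ S, ∀ q ∈ rootPosetB n, q.1 ≤ p.1 → p.2 ≤ q.2 → q ∈ S).card
      = ((Icc 1 (2*n)).powerset.filter Good).card := by
    apply Finset.card_nbij' phi (psi n)
    · intro S hSmem
      rw [Finset.mem_coe, mem_filter, Finset.mem_powerset] at hSmem
      exact phi_good hSmem.1 hSmem.2
    · intro B hB
      rw [Finset.mem_coe, mem_filter, Finset.mem_powerset] at hB
      exact psi_upper hB.1 hB.2
    · intro S hSmem
      rw [Finset.mem_coe, mem_filter, Finset.mem_powerset] at hSmem
      exact left_inv hSmem.1 hSmem.2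
    · intro B hB
      rw [Finset.mem_coe, mem_filter, Finset.mem_powerset] at hB
      exact right_inv hB.1 hB.2
  rw [key, card_good (2*n) ⟨n, rfl⟩]
  congr 1
  omega
end

section
/- For all positive integers A and B with A ≥ B, ∑_{ℓ=0}^{A−B} 2^ℓ · C(A−ℓ, B) = ∑_{s=0}^{A−B} C(A+1, s). -/
lemma sum_two_pow_choose_aux (B n : ℕ) :
    ∑ ℓ ∈ Finset.range (n + 1), 2^ℓ * (B + n - ℓ).choose B =
      ∑ s ∈ Finset.range (n + 1), (B + n + 1).choose s := by
  induction n with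
  | zero => simp
  | succ n ih =>
    have hL : ∑ ℓ ∈ Finset.range (n + 2), 2^ℓ * (B + (n+1) - ℓ).choose B
        = (∑ ℓ ∈ Finset.range (n + 1), 2^(ℓ+1) * (B + n - ℓ).choose B)
          + (B + n + 1).choose B := by
      rw [Finset.sum_range_succ']
      congr 1
      · apply Finset.sum_congr rfl
        intro i hi
        congr 2
        omega
      · simp only [pow_zero, one_mul, Nat.sub_zero]
        rfl
    have hR : ∑ s ∈ Finset.range (n + 2), (B + (n+1) + 1).choose s
        = (∑ s ∈ Finset.range (n + 1), (B + n + 1).choose s)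
          + ((∑ s ∈ Finset.range (n + 1), (B + n + 1).choose s)
              + (B + n + 1).choose (n + 1)) := by
      rw [Finset.sum_range_succ' (fun s => (B + (n+1) + 1).choose s)]
      have : ∀ i, (B + (n+1) + 1).choose (i+1)
          = (B + n + 1).choose i + (B + n + 1).choose (i+1) := by
        intro i
        have : B + (n+1) + 1 = (B + n + 1) + 1 := by omega
        rw [this, Nat.choose_succ_succ]
      simp only [this, Finset.sum_add_distrib]
      have h2 : (∑ s ∈ Finset.range (n + 1), (B + n + 1).choose (s+1))
          + (B + (n+1) + 1).choose 0
          = ∑ s ∈ Finset.range (n + 2), (B + n + 1).choose s := by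
        rw [Finset.sum_range_succ' (fun s => (B + n + 1).choose s)]
        simp
      have h3 : ∑ s ∈ Finset.range (n + 2), (B + n + 1).choose s
          = (∑ s ∈ Finset.range (n + 1), (B + n + 1).choose s)
            + (B + n + 1).choose (n+1) := Finset.sum_range_succ _ _
      omega
    have hsym : (B + n + 1).choose (n + 1) = (B + n + 1).choose B := by
      have := Nat.choose_symm (n := B + n + 1) (k := n + 1) (by omega)
      simpa [Nat.add_sub_cancel, show B + n + 1 - (n+1) = B by omega] using this.symm
    rw [hL, hR, hsym, ← ih]
    have hd : ∀ ℓ, 2^(ℓ+1) * (B + n - ℓ).choose B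
        = 2^ℓ * (B + n - ℓ).choose B + 2^ℓ * (B + n - ℓ).choose B := by
      intro ℓ; ring
    simp only [hd, Finset.sum_add_distrib]
    omega

theorem sum_two_pow_choose (A B : ℕ) (hA : 1 ≤ A) (hB : 1 ≤ B) (hAB : B ≤ A) :
    ∑ ℓ ∈ Finset.range (A - B + 1), 2^ℓ * (A - ℓ).choose B =
      ∑ s ∈ Finset.range (A - B + 1), (A + 1).choose s := by
  have hA' : A = B + (A - B) := by omega
  calc ∑ ℓ ∈ Finset.range (A - B + 1), 2^ℓ * (A - ℓ).choose B
      = ∑ ℓ ∈ Finset.range (A - B + 1), 2^ℓ * (B + (A - B) - ℓ).choose B := by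
        rw [← hA']
    _ = ∑ s ∈ Finset.range (A - B + 1), (B + (A - B) + 1).choose s :=
        sum_two_pow_choose_aux B (A - B)
    _ = ∑ s ∈ Finset.range (A - B + 1), (A + 1).choose s := by rw [← hA']
end

section
/- Define b̃_n = (3n+5)·2^{2n−2} − 2(3n−1)·C(2n−2, n−1) for integers n ≥ 2. Then for every integer n ≥ 4, (n−1)·( b̃_n − 8·b̃_{n−1} + 16·b̃_{n−2} ) = 24·C(2n−6, n−2). -/
/-- The number of basic ideals in the affine Lie algebra of type `B̃_n`. -/
def btilde (n : ℕ) : ℤ :=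
  (3*(n : ℤ) + 5) * 2^(2*n-2) - 2*(3*(n : ℤ) - 1) * ((2*n-2).choose (n-1) : ℤ)

/-- The sequence `b̃_n` satisfies the nonhomogeneous linear recurrence
`b̃_n - 8·b̃_{n-1} + 16·b̃_{n-2} = 24/(n-1) · C(2n-6, n-2)` for `n ≥ 4`. -/
theorem btilde_recurrence (n : ℕ) (hn : 4 ≤ n) :
    ((n : ℤ) - 1) * (btilde n - 8 * btilde (n-1) + 16 * btilde (n-2)) =
      24 * ((2*n-6).choose (n-2) : ℤ) := by
  obtain ⟨m, rfl⟩ : ∃ m, n = m + 4 := ⟨n - 4, by omega⟩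
  have h1 := Nat.succ_mul_centralBinom_succ (m+1)
  have h2 := Nat.succ_mul_centralBinom_succ (m+2)
  have h0 := Nat.choose_succ_right_eq (2*m+2) (m+1)
  simp only [Nat.centralBinom] at h1 h2
  unfold btilde
  have e1 : 2*(m+4)-2 = 2*m+6 := by omega
  have e2 : 2*(m+4-1)-2 = 2*m+4 := by omega
  have e3 : 2*(m+4-2)-2 = 2*m+2 := by omega
  have e4 : m+4-1 = m+3 := by omega
  have e5 : m+4-1-1 = m+2 := by omega
  have e6 : m+4-2 = m+2 := by omega
  have e7 : m+4-2-1 = m+1 := by omega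
  have e8 : 2*(m+4)-6 = 2*m+2 := by omega
  rw [e5, e7, e1, e2, e3, e8, e4, e6]
  have f1 : 2*(m+1+1) = 2*m+4 := by omega
  have f2 : 2*(m+2+1) = 2*m+6 := by omega
  have f3 : 2*(m+1) = 2*m+2 := by omega
  have f4 : 2*(m+2) = 2*m+4 := by omega
  have f5 : 2*m+2-(m+1) = m+1 := by omega
  rw [f1, f3] at h1
  rw [f2, f4] at h2
  rw [f5] at h0
  have g5 : m+1+1 = m+2 := by omega
  rw [g5] at h0
  zify at h1 h2 h0
  push_cast
  have hm : (m:ℤ) + 2 ≠ 0 := by positivity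
  apply mul_left_cancel₀ hm
  linear_combination (-2*(3*(m:ℤ)+11)*((m:ℤ)+2)) * h2 + (24*(m:ℤ)^2+124*(m:ℤ)+164) * h1 - 24 * h0
end

section
/- For all integers n ≥ 3, k with 1 ≤ k ≤ n−2, and b with 0 ≤ b ≤ n−2, ∑_{j=1}^{b} (j−1)²·( C(n+b−j−k−2, n−k−2) − C(n+b−j−k−2, n−2) ) = C(n+b−k−1, n−k+1) + C(n+b−k−2, n−k+1) − C(n+b−k−1, n+1) − C(n+b−k−2, n+1). -/
lemma intChoose_natCast_s15 (a r : ℕ) : intChoose (a:ℤ) (r:ℤ) = a.choose r := by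
  unfold intChoose
  split
  · simp
  · next h =>
    have : a < r := by omega
    simp [Nat.choose_eq_zero_of_lt this]

lemma intChoose_eq_zero (m r : ℤ) (h : m < r) : intChoose m r = 0 := by
  unfold intChoose; rw [if_neg]; omega

lemma L2' (r b : ℕ) :
    ∑ i ∈ Finset.range b, (((r + (b - 1 - i)).choose r : ℤ)) = (r+b).choose (r+1) := by
  induction b with
  | zero => simp [Nat.choose_eq_zero_of_lt]
  | succ b ih =>
    rw [Finset.sum_range_succ']
    have h1 : ∀ i ∈ Finset.range b,
        (((r + (b + 1 - 1 - (i+1))).choose r : ℤ)) = ((r + (b-1-i)).choose r : ℤ) := by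
      intro i hi
      congr 2
      omega
    rw [Finset.sum_congr rfl h1, ih, show b + 1 - 1 - 0 = b from by omega,
      show r + (b+1) = (r+b)+1 from by omega,
      show ((r+b)+1).choose (r+1) = (r+b).choose r + (r+b).choose (r+1) from
        Nat.choose_succ_succ' (r+b) r]
    push_cast
    ring

lemma L1' (r b : ℕ) :
    ∑ i ∈ Finset.range b, (2*(i:ℤ)+1) * ((r + (b - 1 - i)).choose r : ℤ) =
      2 * ((r+b).choose (r+2)) + (r+b).choose (r+1) := by
  induction b with
  | zero => simp [Nat.choose_eq_zero_of_lt]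
  | succ b ih =>
    rw [Finset.sum_range_succ']
    have h1 : ∀ i ∈ Finset.range b,
        (2*((i:ℤ)+1)+1) * ((r + (b - (i+1))).choose r : ℤ) =
        (2*(i:ℤ)+1) * ((r + (b-1-i)).choose r : ℤ) + 2 * ((r + (b-1-i)).choose r : ℤ) := by
      intro i hi
      rw [show b - (i+1) = b - 1 - i from by omega]
      ring
    push_cast
    rw [Finset.sum_congr rfl h1, Finset.sum_add_distrib, ← Finset.mul_sum, L2', ih,
      show b - 0 = b from by omega,
      show r + (b+1) = (r+b)+1 from by omega,
      show ((r+b)+1).choose (r+1) = (r+b).choose r + (r+b).choose (r+1) from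
        Nat.choose_succ_succ' (r+b) r,
      show ((r+b)+1).choose (r+2) = (r+b).choose (r+1) + (r+b).choose (r+2) from
        Nat.choose_succ_succ' (r+b) (r+1)]
    push_cast
    ring

lemma L0' (r b : ℕ) :
    ∑ i ∈ Finset.range b, (i:ℤ)^2 * ((r + (b - 1 - i)).choose r : ℤ) =
      2 * ((r+b).choose (r+3)) + (r+b).choose (r+2) := by
  induction b with
  | zero => simp [Nat.choose_eq_zero_of_lt]
  | succ b ih =>
    rw [Finset.sum_range_succ']
    have h1 : ∀ i ∈ Finset.range b,
        ((i:ℤ)+1)^2 * ((r + (b - (i+1))).choose r : ℤ) =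
        (i:ℤ)^2 * ((r + (b-1-i)).choose r : ℤ) + (2*(i:ℤ)+1) * ((r + (b-1-i)).choose r : ℤ) := by
      intro i hi
      rw [show b - (i+1) = b - 1 - i from by omega]
      ring
    push_cast
    rw [Finset.sum_congr rfl h1, Finset.sum_add_distrib, L1', ih,
      show r + (b+1) = (r+b)+1 from by omega,
      show ((r+b)+1).choose (r+2) = (r+b).choose (r+1) + (r+b).choose (r+2) from
        Nat.choose_succ_succ' (r+b) (r+1),
      show ((r+b)+1).choose (r+3) = (r+b).choose (r+2) + (r+b).choose (r+3) from
        Nat.choose_succ_succ' (r+b) (r+2)]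
    push_cast
    ring
lemma Lc (s b : ℕ) (c : ℤ) (hc : c ≤ b) :
    ∑ j ∈ Finset.Icc 1 b, ((j:ℤ)-1)^2 * intChoose ((s:ℤ) + c - j) (s:ℤ) =
      2 * intChoose ((s:ℤ)+c) ((s:ℤ)+3) + intChoose ((s:ℤ)+c) ((s:ℤ)+2) := by
  by_cases h2 : c ≤ 1
  · rw [Finset.sum_eq_zero, intChoose_eq_zero _ _ (by omega), intChoose_eq_zero _ _ (by omega)]
    · ring
    · intro j hj
      simp only [Finset.mem_Icc] at hj
      rcases eq_or_lt_of_le hj.1 with h | h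
      · rw [← h]; norm_num
      · rw [intChoose_eq_zero _ _ (by omega), mul_zero]
  · push_neg at h2
    have hm : ((c.toNat : ℕ) : ℤ) = c := Int.toNat_of_nonneg (by omega)
    set m := c.toNat with hmdef
    have hmb : m ≤ b := by omega
    have hm2 : 2 ≤ m := by omega
    rw [← Finset.sum_subset (Finset.Icc_subset_Icc le_rfl hmb) (by
      intro j hj hj2
      simp only [Finset.mem_Icc] at hj hj2
      have : m < j := by omega
      rw [intChoose_eq_zero _ _ (by omega), mul_zero])]
    rw [← Finset.Ico_add_one_right_eq_Icc, Finset.sum_Ico_eq_sum_range,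
      show m + 1 - 1 = m from rfl]
    have h1 : ∀ i ∈ Finset.range m,
        ((((1:ℕ)+i : ℕ):ℤ)-1)^2 * intChoose ((s:ℤ) + c - ((1:ℕ)+i : ℕ)) (s:ℤ) =
        (i:ℤ)^2 * (((s + (m - 1 - i)).choose s : ℕ) : ℤ) := by
      intro i hi
      simp only [Finset.mem_range] at hi
      rw [show (s:ℤ) + c - ((1:ℕ)+i : ℕ) = (((s + (m - 1 - i) : ℕ)):ℤ) from by push_cast; omega,
        intChoose_natCast_s15]
      push_cast
      ring
    rw [Finset.sum_congr rfl h1, L0',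
      show (s:ℤ) + c = (((s+m : ℕ)):ℤ) from by push_cast; omega,
      show ((s:ℤ)+3) = (((s+3 : ℕ)):ℤ) from by push_cast; ring,
      show ((s:ℤ)+2) = (((s+2 : ℕ)):ℤ) from by push_cast; ring,
      intChoose_natCast_s15, intChoose_natCast_s15]

theorem sum_j_choose_identity (n k b : ℕ) (hn : 3 ≤ n) (hk1 : 1 ≤ k) (hk2 : k ≤ n-2)
    (hb : b ≤ n-2) :
    ∑ j ∈ Finset.Icc 1 b, ((j : ℤ) - 1)^2 *
        (intChoose ((n:ℤ) + b - j - k - 2) ((n:ℤ) - k - 2) -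
          intChoose ((n:ℤ) + b - j - k - 2) ((n:ℤ) - 2)) =
      intChoose ((n:ℤ) + b - k - 1) ((n:ℤ) - k + 1) +
        intChoose ((n:ℤ) + b - k - 2) ((n:ℤ) - k + 1) -
        intChoose ((n:ℤ) + b - k - 1) ((n:ℤ) + 1) -
        intChoose ((n:ℤ) + b - k - 2) ((n:ℤ) + 1) := by
  have hkn : k + 2 ≤ n := by omega
  set r : ℕ := n - k - 2 with hrdef
  set s : ℕ := n - 2 with hsdef
  set N : ℕ := n - k - 2 + b with hNdef
  have hr : (r:ℤ) = (n:ℤ) - k - 2 := by omega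
  have hs : (s:ℤ) = (n:ℤ) - 2 := by omega
  have hN : (N:ℤ) = (n:ℤ) + b - k - 2 := by omega
  have key : ∀ j ∈ Finset.Icc 1 b, ((j : ℤ) - 1)^2 *
        (intChoose ((n:ℤ) + b - j - k - 2) ((n:ℤ) - k - 2) -
          intChoose ((n:ℤ) + b - j - k - 2) ((n:ℤ) - 2)) =
      ((j:ℤ)-1)^2 * intChoose ((r:ℤ) + (b:ℤ) - j) (r:ℤ) -
      ((j:ℤ)-1)^2 * intChoose ((s:ℤ) + ((b:ℤ) - k) - j) (s:ℤ) := by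
    intro j hj
    rw [show (n:ℤ) + b - j - k - 2 = (r:ℤ) + (b:ℤ) - j from by omega,
      show (n:ℤ) - k - 2 = (r:ℤ) from by omega,
      show (n:ℤ) - 2 = (s:ℤ) from by omega,
      show (s:ℤ) + ((b:ℤ) - k) - j = (r:ℤ) + (b:ℤ) - j from by omega]
    ring
  rw [Finset.sum_congr rfl key, Finset.sum_sub_distrib,
    Lc r b (b:ℤ) (by omega), Lc s b ((b:ℤ) - k) (by omega)]
  rw [show (r:ℤ) + (b:ℤ) = ((N:ℕ):ℤ) from by omega,
    show (s:ℤ) + ((b:ℤ) - k) = ((N:ℕ):ℤ) from by omega,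
    show (r:ℤ) + 3 = (((r+3 : ℕ)):ℤ) from by push_cast; ring,
    show (r:ℤ) + 2 = (((r+2 : ℕ)):ℤ) from by push_cast; ring,
    show (s:ℤ) + 3 = (((s+3 : ℕ)):ℤ) from by push_cast; ring,
    show (s:ℤ) + 2 = (((s+2 : ℕ)):ℤ) from by push_cast; ring,
    show (n:ℤ) + b - k - 1 = (((N+1 : ℕ)):ℤ) from by push_cast; omega,
    show (n:ℤ) + b - k - 2 = ((N:ℕ):ℤ) from by omega,
    show (n:ℤ) - k + 1 = (((r+3 : ℕ)):ℤ) from by push_cast; omega,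
    show (n:ℤ) + 1 = (((s+3 : ℕ)):ℤ) from by push_cast; omega]
  simp only [intChoose_natCast_s15]
  rw [show (N+1).choose (r+3) = N.choose (r+2) + N.choose (r+3) from Nat.choose_succ_succ' N (r+2),
    show (N+1).choose (s+3) = N.choose (s+2) + N.choose (s+3) from Nat.choose_succ_succ' N (s+2)]
  push_cast
  ring
end

section
/- For every integer n ≥ 2, 3·∑_{k=1}^{n−2} 2^{k+1} · ∑_{s=0}^{n−3} C(2n−k−4, s) = 3(n−2)·2^{2n−3} − 6(n−2)·C(2n−4, n−2). -/
lemma ic_cast (a b : ℕ) : intChoose (a : ℤ) (b : ℤ) = (a.choose b : ℤ) := by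
  unfold intChoose
  split
  · simp
  · next h =>
    have : a < b := by omega
    rw [Nat.choose_eq_zero_of_lt this]
    simp

lemma ic_neg (N r : ℤ) (h : r < 0) : intChoose N r = 0 := by
  unfold intChoose; rw [if_neg (by omega)]

lemma ic_pascal (a : ℕ) (r : ℤ) :
    intChoose ((a : ℤ) + 1) r = intChoose (a : ℤ) r + intChoose (a : ℤ) (r - 1) := by
  rcases lt_or_ge r 0 with hr | hr
  · rw [ic_neg _ _ hr, ic_neg _ _ hr, ic_neg _ _ (by omega)]
    ring
  · obtain ⟨b, rfl⟩ := Int.eq_ofNat_of_zero_le hr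
    have h1 : ((a : ℤ) + 1) = ((a + 1 : ℕ) : ℤ) := by push_cast; ring
    cases b with
    | zero =>
      simp only [Nat.cast_zero, zero_sub]
      rw [ic_neg _ _ (by norm_num : (-1:ℤ) < 0)]
      unfold intChoose
      rw [if_pos (by omega), if_pos (by omega)]
      simp
    | succ c =>
      have h2 : ((c + 1 : ℕ) : ℤ) - 1 = ((c : ℕ) : ℤ) := by push_cast; ring
      rw [h1, h2, ic_cast, ic_cast, ic_cast, Nat.choose_succ_succ]
      push_cast; ring

/-- partial sum of binomial coefficients -/
def Q (N : ℤ) (b : ℕ) : ℤ := ∑ s ∈ Finset.range b, intChoose N (s : ℤ)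

lemma Q_succ (N : ℤ) (b : ℕ) : Q N (b + 1) = Q N b + intChoose N (b : ℤ) :=
  Finset.sum_range_succ _ _

lemma Q_shift (a b : ℕ) :
    ∑ s ∈ Finset.range b, intChoose (a : ℤ) ((s : ℤ) - 1)
      = Q (a : ℤ) b - intChoose (a : ℤ) ((b : ℤ) - 1) := by
  induction b with
  | zero =>
    simp only [Finset.range_zero, Finset.sum_empty, Q]
    rw [ic_neg _ _ (by norm_num : ((0:ℕ):ℤ) - 1 < 0)]
    ring
  | succ c ih =>
    rw [Finset.sum_range_succ, ih, Q_succ,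
      show ((c + 1 : ℕ) : ℤ) - 1 = (c : ℤ) by push_cast; ring]
    ring

lemma Q_pascal (a b : ℕ) :
    Q ((a : ℤ) + 1) b = 2 * Q (a : ℤ) b - intChoose (a : ℤ) ((b : ℤ) - 1) := by
  unfold Q
  simp only [ic_pascal]
  rw [Finset.sum_add_distrib, Q_shift a b]
  unfold Q
  ring

lemma Q_full (a : ℕ) : Q (a : ℤ) (a + 1) = 2 ^ a := by
  have h : ∑ s ∈ Finset.range (a + 1), (a.choose s : ℤ) = (2 : ℤ) ^ a := by
    rw [← Nat.cast_sum, Nat.sum_range_choose]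
    push_cast; ring
  rw [← h]
  exact Finset.sum_congr rfl fun s _ => ic_cast a s

lemma Q_top (a : ℕ) : Q ((a + 1 : ℕ) : ℤ) (a + 1) = 2 ^ (a + 1) - 1 := by
  have h1 := Q_full (a + 1)
  rw [Q_succ, ic_cast, Nat.choose_self] at h1
  push_cast at h1 ⊢
  linarith

lemma Q_rec (a b : ℕ) :
    Q ((a : ℤ) + 2) (b + 1)
      = 4 * Q (a : ℤ) b + intChoose (a : ℤ) (b : ℤ)
        - intChoose (a : ℤ) ((b : ℤ) - 1) := by
  have h1 := Q_pascal (a + 1) (b + 1)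
  have h2 := Q_pascal a (b + 1)
  have h3 := ic_pascal a (b : ℤ)
  have h4 := Q_succ (a : ℤ) b
  rw [show (((a + 1 : ℕ) : ℤ) + 1) = (a : ℤ) + 2 by push_cast; ring,
    show ((a + 1 : ℕ) : ℤ) = (a : ℤ) + 1 by push_cast; ring,
    show ((b + 1 : ℕ) : ℤ) - 1 = (b : ℤ) by push_cast; ring] at h1
  rw [show ((b + 1 : ℕ) : ℤ) - 1 = (b : ℤ) by push_cast; ring] at h2
  linarith

lemma sum_Icc_one {M : Type*} [AddCommMonoid M] (m : ℕ) (f : ℕ → M) :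
    ∑ k ∈ Finset.Icc 1 m, f k = ∑ i ∈ Finset.range m, f (i + 1) := by
  induction m with
  | zero => simp
  | succ c ih =>
    rw [Finset.sum_Icc_succ_top (by omega), ih, Finset.sum_range_succ]

lemma sumIcc_eq_range (m : ℕ) (f : ℤ → ℤ) :
    ∑ s ∈ Finset.Icc (0 : ℤ) ((m : ℤ) - 1), f s = ∑ s ∈ Finset.range m, f (s : ℤ) := by
  induction m with
  | zero =>
    rw [show ((0 : ℕ) : ℤ) - 1 = -1 by norm_num, Finset.Icc_eq_empty (by norm_num)]
    simp
  | succ c ih =>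
    have hins : Finset.Icc (0 : ℤ) (((c + 1 : ℕ) : ℤ) - 1)
        = insert (c : ℤ) (Finset.Icc 0 ((c : ℤ) - 1)) := by
      ext x
      simp only [Finset.mem_Icc, Finset.mem_insert]
      omega
    rw [hins, Finset.sum_insert (by simp only [Finset.mem_Icc]; omega),
      Finset.sum_range_succ, ih]
    ring

lemma cent (m : ℕ) :
    ((m : ℤ) + 1) * ((2 * (m + 1)).choose (m + 1) : ℤ)
      = (4 * (m : ℤ) + 2) * ((2 * m).choose m : ℤ) := by
  have h := Nat.succ_mul_centralBinom_succ m
  simp only [Nat.centralBinom] at h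
  have h' : ((m + 1) * ((2 * (m + 1)).choose (m + 1)) : ℤ)
      = ((2 * (2 * m + 1) * ((2 * m).choose m)) : ℤ) := by exact_mod_cast congrArg (Nat.cast : ℕ → ℤ) h
  push_cast at h'
  linarith

lemma Hsum (m : ℕ) :
    ∑ k ∈ Finset.Icc 1 m, (2 : ℤ) ^ (k + 1) *
        (intChoose ((2 * m - k : ℕ) : ℤ) (m : ℤ)
          - intChoose ((2 * m - k : ℕ) : ℤ) ((m : ℤ) - 1))
      = 2 ^ (m + 2) - 4 * intChoose ((2 * m : ℕ) : ℤ) (m : ℤ) := by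
  cases m with
  | zero => simp [intChoose]
  | succ j =>
    set m := j + 1 with hm
    set t : ℕ → ℤ := fun k => 2 ^ (k + 1) *
      (intChoose ((2 * m - k : ℕ) : ℤ) (m : ℤ)
        + intChoose ((2 * m - k : ℕ) : ℤ) ((m : ℤ) - 1)) with ht
    have key : ∀ i ∈ Finset.range m,
        (2 : ℤ) ^ ((i + 1) + 1) *
          (intChoose ((2 * m - (i + 1) : ℕ) : ℤ) (m : ℤ)
            - intChoose ((2 * m - (i + 1) : ℕ) : ℤ) ((m : ℤ) - 1))
        = t (i + 1 + 1) - t (i + 1) := by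
      intro i hi
      have hi' : i < m := Finset.mem_range.mp hi
      have e1 : ((2 * m - (i + 1) : ℕ) : ℤ) = ((2 * m - (i + 2) : ℕ) : ℤ) + 1 := by omega
      have p1 := ic_pascal (2 * m - (i + 2)) (m : ℤ)
      have p2 := ic_pascal (2 * m - (i + 2)) ((m : ℤ) - 1)
      rw [ht]
      simp only []
      rw [e1, p1, p2]
      ring
    rw [sum_Icc_one m]
    rw [Finset.sum_congr rfl key]
    rw [Finset.sum_range_sub (fun i => t (i + 1)) m]
    have et2 : t (m + 1) = 2 ^ (m + 2) := by
      rw [ht]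
      simp only []
      have e1 : (2 * m - (m + 1) : ℕ) = j := by omega
      rw [e1]
      have z1 : intChoose ((j : ℕ) : ℤ) (m : ℤ) = 0 := by
        rw [ic_cast, Nat.choose_eq_zero_of_lt (by omega)]; simp
      have z2 : intChoose ((j : ℕ) : ℤ) ((m : ℤ) - 1) = 0 + 1 := by
        rw [show ((m : ℤ) - 1) = ((j : ℕ) : ℤ) by push_cast [hm]; ring, ic_cast,
          Nat.choose_self]
        norm_num
      rw [z1, z2]
      ring
    have et1 : t 1 = 4 * intChoose ((2 * m : ℕ) : ℤ) (m : ℤ) := by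
      rw [ht]
      simp only []
      have e1 : ((2 * m : ℕ) : ℤ) = ((2 * m - 1 : ℕ) : ℤ) + 1 := by omega
      rw [e1, ic_pascal (2 * m - 1) (m : ℤ)]
      ring
    rw [et2, et1]

lemma L1 (m : ℕ) :
    ∑ k ∈ Finset.Icc 1 m, (2 : ℤ) ^ (k + 1) * Q ((2 * m - k : ℕ) : ℤ) m
      = (m : ℤ) * 2 ^ (2 * m + 1) - 2 * (m : ℤ) * intChoose ((2 * m : ℕ) : ℤ) (m : ℤ) := by
  induction m with
  | zero => simp
  | succ m ih =>
    rw [Finset.sum_Icc_succ_top (by omega)]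
    have etop : (2 : ℤ) ^ (m + 1 + 1) * Q ((2 * (m + 1) - (m + 1) : ℕ) : ℤ) (m + 1)
        = 2 ^ (m + 2) * (2 ^ (m + 1) - 1) := by
      rw [show (2 * (m + 1) - (m + 1) : ℕ) = m + 1 by omega, Q_top m]
    have estep : ∀ k ∈ Finset.Icc 1 m,
        (2 : ℤ) ^ (k + 1) * Q ((2 * (m + 1) - k : ℕ) : ℤ) (m + 1)
        = 4 * ((2 : ℤ) ^ (k + 1) * Q ((2 * m - k : ℕ) : ℤ) m)
          + (2 : ℤ) ^ (k + 1) *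
            (intChoose ((2 * m - k : ℕ) : ℤ) (m : ℤ)
              - intChoose ((2 * m - k : ℕ) : ℤ) ((m : ℤ) - 1)) := by
      intro k hk
      rw [Finset.mem_Icc] at hk
      have e1 : ((2 * (m + 1) - k : ℕ) : ℤ) = ((2 * m - k : ℕ) : ℤ) + 2 := by omega
      rw [e1, Q_rec (2 * m - k) m]
      ring
    rw [Finset.sum_congr rfl estep, Finset.sum_add_distrib, ← Finset.mul_sum, ih, Hsum m,
      etop]
    rw [ic_cast (2 * m) m, ic_cast (2 * (m + 1)) (m + 1)]
    push_cast
    linear_combination (2 : ℤ) * cent m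

theorem sum_k_partial_binomial (n : ℕ) (hn : 2 ≤ n) :
    3 * ∑ k ∈ Finset.Icc 1 (n-2), (2:ℤ)^(k+1) *
        ∑ s ∈ Finset.Icc (0:ℤ) ((n:ℤ) - 3), intChoose (2*(n:ℤ) - k - 4) s =
      3*((n:ℤ) - 2) * 2^(2*n-3) - 6*((n:ℤ) - 2) * intChoose (2*(n:ℤ) - 4) ((n:ℤ) - 2) := by
  obtain ⟨m, rfl⟩ : ∃ m, n = m + 2 := ⟨n - 2, by omega⟩
  have h2 : m + 2 - 2 = m := by omega
  have h3 : ((m + 2 : ℕ) : ℤ) - 3 = (m : ℤ) - 1 := by push_cast; ring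
  have hsum : ∑ k ∈ Finset.Icc 1 m, (2:ℤ)^(k+1) *
      ∑ s ∈ Finset.Icc (0:ℤ) (((m + 2 : ℕ) : ℤ) - 3), intChoose (2*((m + 2 : ℕ):ℤ) - k - 4) s
      = ∑ k ∈ Finset.Icc 1 m, (2 : ℤ) ^ (k + 1) * Q ((2 * m - k : ℕ) : ℤ) m := by
    refine Finset.sum_congr rfl fun k hk => ?_
    rw [Finset.mem_Icc] at hk
    have e1 : 2 * (((m + 2 : ℕ)) : ℤ) - k - 4 = ((2 * m - k : ℕ) : ℤ) := by omega
    rw [h3, e1, sumIcc_eq_range m (fun s => intChoose ((2 * m - k : ℕ) : ℤ) s)]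
    rfl
  rw [h2, hsum]
  have e2 : 2 * (m + 2) - 3 = 2 * m + 1 := by omega
  have e3 : ((m + 2 : ℕ) : ℤ) - 2 = (m : ℤ) := by push_cast; ring
  have e4 : 2 * ((m + 2 : ℕ) : ℤ) - 4 = ((2 * m : ℕ) : ℤ) := by push_cast; ring
  rw [e2, e3, e4, L1 m]
  ring
end

section
/- For all integers n ≥ 3 and k with 1 ≤ k ≤ n−2, ∑_{b=1}^{n−2} (b²−3)·( C(2n−b−k−4, n−k−2) − C(2n−b−k−4, n−2) ) = −2n²·C(2n−k−2, n+1) + (2n²−1)·C(2n−k−3, n) − 3·C(2n−k−4, n−3) + 3·C(2n−k−4, n−1) + (2n−5)·C(2n−k−3, n−3) − 2(n−2)²·C(2n−k−3, n−2) − 2(n−1)(n−2)·C(2n−k−3, n−1) + 2(n+1)(n−1)·C(2n−k−3, n+1) + 2·C(2n−k−2, n−3) − 2(n−2)·C(2n−k−2, n−2) + 2(n−2)(n−1)·C(2n−k−2, n−1). -/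
lemma ich_eq_choose {m j : ℤ} (hm : 0 ≤ m) (hj : 0 ≤ j) :
    intChoose m j = (m.toNat.choose j.toNat : ℤ) := by
  unfold intChoose
  by_cases h : 0 ≤ j ∧ j ≤ m
  · rw [if_pos h]
  · rw [if_neg h]
    have hmj : m < j := by omega
    rw [Nat.choose_eq_zero_of_lt (by omega)]
    norm_num

lemma ich_zero {m j : ℤ} (h : m < j) : intChoose m j = 0 := by
  unfold intChoose
  rw [if_neg (by omega)]

lemma ich_zero' {m j : ℤ} (h : j < 0) : intChoose m j = 0 := by
  unfold intChoose
  rw [if_neg (by omega)]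

lemma ich_pascal (m j : ℤ) (hm : 0 ≤ m) :
    intChoose (m+1) j = intChoose m j + intChoose m (j-1) := by
  rcases lt_or_ge j 0 with hj | hj
  · rw [ich_zero' hj, ich_zero' hj, ich_zero' (by omega)]; ring
  rcases eq_or_lt_of_le hj with hj0 | hj1
  · subst hj0
    rw [ich_eq_choose (by omega) le_rfl, ich_eq_choose hm le_rfl, ich_zero' (by omega)]
    simp
  · rw [ich_eq_choose (by omega) (by omega), ich_eq_choose hm (by omega),
      ich_eq_choose hm (by omega)]
    rw [show (m+1).toNat = m.toNat + 1 from by omega,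
      show j.toNat = (j-1).toNat + 1 from by omega, Nat.choose_succ_succ]
    push_cast
    ring

lemma ich_symm (m j : ℤ) (hm : 0 ≤ m) : intChoose m j = intChoose m (m - j) := by
  rcases lt_or_ge j 0 with hj | hj
  · rw [ich_zero' hj, ich_zero (by omega)]
  rcases le_or_gt j m with hjm | hjm
  · rw [ich_eq_choose hm hj, ich_eq_choose hm (by omega),
      show (m - j).toNat = m.toNat - j.toNat from by omega,
      Nat.choose_symm (by omega)]
  · rw [ich_zero hjm, ich_zero' (by omega)]

lemma ich_absorb (m j : ℤ) (hm : 0 ≤ m) :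
    (j+1) * intChoose m (j+1) = (m - j) * intChoose m j := by
  rcases lt_or_ge j 0 with hj | hj
  · rcases eq_or_lt_of_le (by omega : j + 1 ≤ 0) with hj1 | hj1
    · rw [ich_zero' hj, hj1, zero_mul, mul_zero]
    · rw [ich_zero' hj, ich_zero' hj1, mul_zero, mul_zero]
  rcases le_or_gt (j+1) m with hjm | hjm
  · rw [ich_eq_choose hm (by omega), ich_eq_choose hm hj,
      show (j+1).toNat = j.toNat + 1 from by omega]
    have h := Nat.choose_succ_right_eq m.toNat j.toNat
    have h' : (m.toNat.choose (j.toNat+1) * (j.toNat+1) : ℤ)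
        = m.toNat.choose j.toNat * ((m.toNat - j.toNat : ℕ) : ℤ) := by
      exact_mod_cast congrArg (fun x : ℕ => (x : ℤ)) h
    rw [show ((m.toNat - j.toNat : ℕ) : ℤ) = m - j from by omega] at h'
    rw [show ((j.toNat : ℤ) + 1 : ℤ) = j + 1 from by omega] at h'
    linear_combination h'
  · rw [ich_zero (by omega), mul_zero]
    rcases eq_or_lt_of_le (by omega : m ≤ j) with hmj | hmj
    · rw [← hmj, sub_self, zero_mul]
    · rw [ich_zero hmj, mul_zero]

lemma ich_pascal' (m m' j j' : ℤ) (hm : 0 ≤ m) (h1 : m' = m + 1) (h2 : j' = j - 1) :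
    intChoose m' j = intChoose m j + intChoose m j' := by
  subst h1; subst h2; exact ich_pascal m j hm

lemma ich_symm' (m j j' : ℤ) (hm : 0 ≤ m) (h : j' = m - j) :
    intChoose m j = intChoose m j' := by
  subst h; exact ich_symm m j hm

lemma ich_absorb' (m j j' a c : ℤ) (hm : 0 ≤ m) (hj : j' = j + 1) (ha : a = j + 1)
    (hc : c = m - j) : a * intChoose m j' = c * intChoose m j := by
  subst hj; subst ha; subst hc; exact ich_absorb m j hm

/-- Telescoping antidifference for the sum in `sum_b_choose_identity`. -/
def auxF (n k b : ℤ) : ℤ :=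
  (n-k-1)*(n-k) * intChoose (2*n-k-3-b) (n-k+1)
  + (n-k-1)*(5-2*n) * intChoose (2*n-k-3-b) (n-k)
  + ((n-2)^2-3) * intChoose (2*n-k-3-b) (n-k-1)
  - n*(n-1) * intChoose (2*n-k-3-b) (n+1)
  - (n-1)*(2*k-2*n+5) * intChoose (2*n-k-3-b) n
  - ((n-k-2)^2-3) * intChoose (2*n-k-3-b) (n-1)

theorem sum_b_choose_identity (n k : ℕ) (hn : 3 ≤ n) (hk1 : 1 ≤ k) (hk2 : k ≤ n-2) :
    ∑ b ∈ Finset.Icc 1 (n-2), ((b : ℤ)^2 - 3) *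
        (intChoose (2*(n:ℤ) - b - k - 4) ((n:ℤ) - k - 2) -
          intChoose (2*(n:ℤ) - b - k - 4) ((n:ℤ) - 2)) =
      -2*(n:ℤ)^2 * intChoose (2*(n:ℤ) - k - 2) ((n:ℤ) + 1)
        + (2*(n:ℤ)^2 - 1) * intChoose (2*(n:ℤ) - k - 3) (n:ℤ)
        - 3 * intChoose (2*(n:ℤ) - k - 4) ((n:ℤ) - 3)
        + 3 * intChoose (2*(n:ℤ) - k - 4) ((n:ℤ) - 1)
        + (2*(n:ℤ) - 5) * intChoose (2*(n:ℤ) - k - 3) ((n:ℤ) - 3)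
        - 2*((n:ℤ) - 2)^2 * intChoose (2*(n:ℤ) - k - 3) ((n:ℤ) - 2)
        - 2*((n:ℤ) - 1)*((n:ℤ) - 2) * intChoose (2*(n:ℤ) - k - 3) ((n:ℤ) - 1)
        + 2*((n:ℤ) + 1)*((n:ℤ) - 1) * intChoose (2*(n:ℤ) - k - 3) ((n:ℤ) + 1)
        + 2 * intChoose (2*(n:ℤ) - k - 2) ((n:ℤ) - 3)
        - 2*((n:ℤ) - 2) * intChoose (2*(n:ℤ) - k - 2) ((n:ℤ) - 2)
        + 2*((n:ℤ) - 2)*((n:ℤ) - 1) * intChoose (2*(n:ℤ) - k - 2) ((n:ℤ) - 1) := by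
  have h3 : (3:ℤ) ≤ (n:ℤ) := by exact_mod_cast hn
  have hk1' : (1:ℤ) ≤ (k:ℤ) := by exact_mod_cast hk1
  have hk2n : k + 2 ≤ n := by omega
  have hk2' : (k:ℤ) ≤ (n:ℤ) - 2 := by
    have := (Nat.cast_le (α := ℤ)).2 hk2n
    push_cast at this
    omega
  -- telescoping step
  have step : ∀ b : ℤ, 1 ≤ b → b ≤ (n:ℤ) - 2 →
      auxF (n:ℤ) (k:ℤ) b - auxF (n:ℤ) (k:ℤ) (b+1) =
      (b^2 - 3) * (intChoose (2*(n:ℤ) - b - k - 4) ((n:ℤ) - k - 2) -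
          intChoose (2*(n:ℤ) - b - k - 4) ((n:ℤ) - 2)) := by
    intro b hb1 hb2
    have hm : (0:ℤ) ≤ 2*(n:ℤ) - b - (k:ℤ) - 4 := by omega
    simp only [auxF]
    rw [show 2*(n:ℤ)-(k:ℤ)-3-(b+1) = 2*(n:ℤ) - b - (k:ℤ) - 4 from by ring]
    have hp1 := ich_pascal' (2*(n:ℤ) - b - (k:ℤ) - 4) (2*(n:ℤ)-(k:ℤ)-3-b)
      ((n:ℤ)-(k:ℤ)+1) ((n:ℤ)-(k:ℤ)) hm (by ring) (by ring)
    have hp2 := ich_pascal' (2*(n:ℤ) - b - (k:ℤ) - 4) (2*(n:ℤ)-(k:ℤ)-3-b)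
      ((n:ℤ)-(k:ℤ)) ((n:ℤ)-(k:ℤ)-1) hm (by ring) (by ring)
    have hp3 := ich_pascal' (2*(n:ℤ) - b - (k:ℤ) - 4) (2*(n:ℤ)-(k:ℤ)-3-b)
      ((n:ℤ)-(k:ℤ)-1) ((n:ℤ)-(k:ℤ)-2) hm (by ring) (by ring)
    have hp4 := ich_pascal' (2*(n:ℤ) - b - (k:ℤ) - 4) (2*(n:ℤ)-(k:ℤ)-3-b)
      ((n:ℤ)+1) (n:ℤ) hm (by ring) (by ring)
    have hp5 := ich_pascal' (2*(n:ℤ) - b - (k:ℤ) - 4) (2*(n:ℤ)-(k:ℤ)-3-b)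
      (n:ℤ) ((n:ℤ)-1) hm (by ring) (by ring)
    have hp6 := ich_pascal' (2*(n:ℤ) - b - (k:ℤ) - 4) (2*(n:ℤ)-(k:ℤ)-3-b)
      ((n:ℤ)-1) ((n:ℤ)-2) hm (by ring) (by ring)
    have ha1 := ich_absorb' (2*(n:ℤ) - b - (k:ℤ) - 4) ((n:ℤ)-(k:ℤ)-2) ((n:ℤ)-(k:ℤ)-1)
      ((n:ℤ)-(k:ℤ)-1) ((n:ℤ)-2-b) hm (by ring) (by ring) (by ring)
    have ha2 := ich_absorb' (2*(n:ℤ) - b - (k:ℤ) - 4) ((n:ℤ)-(k:ℤ)-1) ((n:ℤ)-(k:ℤ))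
      ((n:ℤ)-(k:ℤ)) ((n:ℤ)-3-b) hm (by ring) (by ring) (by ring)
    have ha3 := ich_absorb' (2*(n:ℤ) - b - (k:ℤ) - 4) ((n:ℤ)-2) ((n:ℤ)-1)
      ((n:ℤ)-1) ((n:ℤ)-(k:ℤ)-2-b) hm (by ring) (by ring) (by ring)
    have ha4 := ich_absorb' (2*(n:ℤ) - b - (k:ℤ) - 4) ((n:ℤ)-1) (n:ℤ)
      (n:ℤ) ((n:ℤ)-(k:ℤ)-3-b) hm (by ring) (by ring) (by ring)
    linear_combination
      ((n:ℤ)-(k:ℤ)-1)*((n:ℤ)-(k:ℤ)) * hp1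
      + ((n:ℤ)-(k:ℤ)-1)*(5-2*(n:ℤ)) * hp2
      + (((n:ℤ)-2)^2-3) * hp3
      - (n:ℤ)*((n:ℤ)-1) * hp4
      - ((n:ℤ)-1)*(2*(k:ℤ)-2*(n:ℤ)+5) * hp5
      - (((n:ℤ)-(k:ℤ)-2)^2-3) * hp6
      + (2-(n:ℤ)-b) * ha1
      + ((n:ℤ)-(k:ℤ)-1) * ha2
      + ((n:ℤ)-2+b-(k:ℤ)) * ha3
      - ((n:ℤ)-1) * ha4
  -- rewrite the sum as a telescoping sum
  rw [show Finset.Icc 1 (n-2) = Finset.Ico 1 (n-2+1) from (Finset.Ico_add_one_right_eq_Icc _ _).symm,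
    Finset.sum_Ico_eq_sum_range]
  rw [show n - 2 + 1 - 1 = n - 2 from by omega]
  have key : ∀ i ∈ Finset.range (n-2),
      (((1+i : ℕ) : ℤ)^2 - 3) *
        (intChoose (2*(n:ℤ) - ((1+i : ℕ) : ℤ) - k - 4) ((n:ℤ) - k - 2) -
          intChoose (2*(n:ℤ) - ((1+i : ℕ) : ℤ) - k - 4) ((n:ℤ) - 2)) =
      auxF (n:ℤ) (k:ℤ) ((i:ℤ)+1) - auxF (n:ℤ) (k:ℤ) (((i+1 : ℕ):ℤ)+1) := by
    intro i hi
    have hi' : i < n - 2 := Finset.mem_range.1 hi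
    have hb2 : (i:ℤ) + 1 ≤ (n:ℤ) - 2 := by
      have : i + 3 ≤ n := by omega
      have := (Nat.cast_le (α := ℤ)).2 this
      push_cast at this
      omega
    rw [show ((1+i : ℕ) : ℤ) = (i:ℤ) + 1 from by push_cast; ring,
      show ((i+1 : ℕ) : ℤ) + 1 = ((i:ℤ) + 1) + 1 from by push_cast; ring]
    exact (step ((i:ℤ)+1) (by omega) hb2).symm
  rw [Finset.sum_congr rfl key,
    Finset.sum_range_sub' (fun i : ℕ => auxF (n:ℤ) (k:ℤ) ((i:ℤ)+1)) (n-2)]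
  rw [show (((0:ℕ):ℤ)+1 : ℤ) = 1 from by norm_num]
  rw [show (((n-2 : ℕ):ℤ)+1 : ℤ) = (n:ℤ) - 1 from by omega]
  -- the top endpoint vanishes
  have hend : auxF (n:ℤ) (k:ℤ) ((n:ℤ)-1) = 0 := by
    simp only [auxF]
    have z : ∀ j : ℤ, 2*(n:ℤ)-(k:ℤ)-3-((n:ℤ)-1) < j →
        intChoose (2*(n:ℤ)-(k:ℤ)-3-((n:ℤ)-1)) j = 0 := fun j hj => ich_zero hj
    rw [z ((n:ℤ)-(k:ℤ)+1) (by omega), z ((n:ℤ)-(k:ℤ)) (by omega),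
      z ((n:ℤ)-(k:ℤ)-1) (by omega), z ((n:ℤ)+1) (by omega),
      z (n:ℤ) (by omega), z ((n:ℤ)-1) (by omega)]
    ring
  rw [hend, sub_zero]
  -- final closed-form identity
  simp only [auxF]
  rw [show 2*(n:ℤ)-(k:ℤ)-3-(1:ℤ) = 2*(n:ℤ) - (k:ℤ) - 4 from by ring]
  have hm : (0:ℤ) ≤ 2*(n:ℤ) - (k:ℤ) - 4 := by omega
  have hm1 : (0:ℤ) ≤ 2*(n:ℤ) - (k:ℤ) - 3 := by omega
  have hp2a := ich_pascal' (2*(n:ℤ)-(k:ℤ)-3) (2*(n:ℤ)-(k:ℤ)-2) ((n:ℤ)+1) (n:ℤ)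
    hm1 (by ring) (by ring)
  have hp2b := ich_pascal' (2*(n:ℤ)-(k:ℤ)-3) (2*(n:ℤ)-(k:ℤ)-2) ((n:ℤ)-3) ((n:ℤ)-4)
    hm1 (by ring) (by ring)
  have hp2c := ich_pascal' (2*(n:ℤ)-(k:ℤ)-3) (2*(n:ℤ)-(k:ℤ)-2) ((n:ℤ)-2) ((n:ℤ)-3)
    hm1 (by ring) (by ring)
  have hp2d := ich_pascal' (2*(n:ℤ)-(k:ℤ)-3) (2*(n:ℤ)-(k:ℤ)-2) ((n:ℤ)-1) ((n:ℤ)-2)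
    hm1 (by ring) (by ring)
  have hp1a := ich_pascal' (2*(n:ℤ)-(k:ℤ)-4) (2*(n:ℤ)-(k:ℤ)-3) ((n:ℤ)+1) (n:ℤ)
    hm (by ring) (by ring)
  have hp1b := ich_pascal' (2*(n:ℤ)-(k:ℤ)-4) (2*(n:ℤ)-(k:ℤ)-3) (n:ℤ) ((n:ℤ)-1)
    hm (by ring) (by ring)
  have hp1c := ich_pascal' (2*(n:ℤ)-(k:ℤ)-4) (2*(n:ℤ)-(k:ℤ)-3) ((n:ℤ)-1) ((n:ℤ)-2)
    hm (by ring) (by ring)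
  have hp1d := ich_pascal' (2*(n:ℤ)-(k:ℤ)-4) (2*(n:ℤ)-(k:ℤ)-3) ((n:ℤ)-2) ((n:ℤ)-3)
    hm (by ring) (by ring)
  have hp1e := ich_pascal' (2*(n:ℤ)-(k:ℤ)-4) (2*(n:ℤ)-(k:ℤ)-3) ((n:ℤ)-3) ((n:ℤ)-4)
    hm (by ring) (by ring)
  have hp1f := ich_pascal' (2*(n:ℤ)-(k:ℤ)-4) (2*(n:ℤ)-(k:ℤ)-3) ((n:ℤ)-4) ((n:ℤ)-5)
    hm (by ring) (by ring)
  have hs1 := ich_symm' (2*(n:ℤ)-(k:ℤ)-4) ((n:ℤ)+1) ((n:ℤ)-(k:ℤ)-5) hm (by ring)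
  have hs2 := ich_symm' (2*(n:ℤ)-(k:ℤ)-4) (n:ℤ) ((n:ℤ)-(k:ℤ)-4) hm (by ring)
  have hs3 := ich_symm' (2*(n:ℤ)-(k:ℤ)-4) ((n:ℤ)-1) ((n:ℤ)-(k:ℤ)-3) hm (by ring)
  have hs4 := ich_symm' (2*(n:ℤ)-(k:ℤ)-4) ((n:ℤ)-3) ((n:ℤ)-(k:ℤ)-1) hm (by ring)
  have hs5 := ich_symm' (2*(n:ℤ)-(k:ℤ)-4) ((n:ℤ)-4) ((n:ℤ)-(k:ℤ)) hm (by ring)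
  have hs6 := ich_symm' (2*(n:ℤ)-(k:ℤ)-4) ((n:ℤ)-5) ((n:ℤ)-(k:ℤ)+1) hm (by ring)
  have hA1 := ich_absorb' (2*(n:ℤ)-(k:ℤ)-4) ((n:ℤ)-(k:ℤ)-5) ((n:ℤ)-(k:ℤ)-4)
    ((n:ℤ)-(k:ℤ)-4) ((n:ℤ)+1) hm (by ring) (by ring) (by ring)
  have hA2 := ich_absorb' (2*(n:ℤ)-(k:ℤ)-4) ((n:ℤ)-(k:ℤ)-4) ((n:ℤ)-(k:ℤ)-3)
    ((n:ℤ)-(k:ℤ)-3) (n:ℤ) hm (by ring) (by ring) (by ring)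
  have hA3 := ich_absorb' (2*(n:ℤ)-(k:ℤ)-4) ((n:ℤ)-(k:ℤ)-1) ((n:ℤ)-(k:ℤ))
    ((n:ℤ)-(k:ℤ)) ((n:ℤ)-3) hm (by ring) (by ring) (by ring)
  have hA4 := ich_absorb' (2*(n:ℤ)-(k:ℤ)-4) ((n:ℤ)-(k:ℤ)) ((n:ℤ)-(k:ℤ)+1)
    ((n:ℤ)-(k:ℤ)+1) ((n:ℤ)-4) hm (by ring) (by ring) (by ring)
  linear_combination
    2*(n:ℤ)^2 * hp2a - 2 * hp2b + 2*((n:ℤ)-2) * hp2c - 2*((n:ℤ)-2)*((n:ℤ)-1) * hp2d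
    + 2 * hp1a + hp1b - hp1e - 2 * hp1f
    + (-(n:ℤ)^2+(n:ℤ)+2) * hs1
    + (3-((n:ℤ)-1)*(2*(k:ℤ)-2*(n:ℤ)+5)) * hs2
    + (1-((n:ℤ)-(k:ℤ)-2)^2) * hs3
    + 2 * hs4 - 3 * hs5 - 2 * hs6
    + ((n:ℤ)-2) * hA1 - ((n:ℤ)-(k:ℤ)-1) * hA2 - ((n:ℤ)-1) * hA3 + ((n:ℤ)-(k:ℤ)-2) * hA4
end
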